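/- arXiv:1908.05083 — 2 statements merged into one kernel-verified Lean document; each statement's English description precedes it below -/
import Mathlib

section
/- Let 𝔤 := 𝔨₀ + 𝔞 + 𝔫 ⊆ 𝔰𝔬(p,q), let x ∈ ℝ^{p+q} be nonzero, and set m := dim 𝔤 − dim 𝔤_x. Then: (a) if x^{p−i+1} + x^{p+i} ≠ 0 for some 1 ≤ i ≤ q and k is the minimal such index, then m = p+q−k; (b) if p > q, x^{p−i+1} + x^{p+i} = 0 for all 1 ≤ i ≤ q, and x^j ≠ 0 for some 1 ≤ j ≤ p−q, then m = p−1; (c) if x^j = 0 for all 1 ≤ j ≤ p−q and x^{p−i+1} + x^{p+i} = 0 for all 1 ≤ i ≤ q, then m = max{ j ∈ {1,…,q} : x^{p+j} ≠ 0 }. -/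
open Matrix

noncomputable section

/-- 1-based standard basis vector `e i` of `ℝ^n` (zero if `i` is out of range). -/
def stdE (n i : ℕ) : Fin n → ℝ := fun j => if (j : ℕ) + 1 = i then 1 else 0

/-- `w i := e_{p-i+1} - e_{p+i}`. -/
def wVec (p q i : ℕ) : Fin (p + q) → ℝ := stdE (p + q) (p - i + 1) - stdE (p + q) (p + i)

/-- `v i := e_{p-i+1} + e_{p+i}`. -/
def vVec (p q i : ℕ) : Fin (p + q) → ℝ := stdE (p + q) (p - i + 1) + stdE (p + q) (p + i)

/-- The scalar product of signature `(p,q)` on `ℝ^{p+q}`. -/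
def ip (p q : ℕ) (x y : Fin (p + q) → ℝ) : ℝ :=
  ∑ i : Fin (p + q), (if (i : ℕ) < p then (1 : ℝ) else -1) * x i * y i

/-- The matrix `J = diag(I_p, -I_q)`. -/
def Jmat (p q : ℕ) : Matrix (Fin (p + q)) (Fin (p + q)) ℝ :=
  Matrix.diagonal (fun i => if (i : ℕ) < p then (1 : ℝ) else -1)

/-- Entry of a square matrix, with 1-based indices (0 outside the range). -/
def ent {n : ℕ} (X : Matrix (Fin n) (Fin n) ℝ) (i j : ℕ) : ℝ :=
  if h : i - 1 < n ∧ j - 1 < n then X ⟨i - 1, h.1⟩ ⟨j - 1, h.2⟩ else 0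

/-- Coordinate of a vector, with 1-based index (0 outside the range). -/
def vent {n : ℕ} (x : Fin n → ℝ) (i : ℕ) : ℝ :=
  if h : i - 1 < n then x ⟨i - 1, h⟩ else 0

lemma ent_zero {n : ℕ} (i j : ℕ) : ent (0 : Matrix (Fin n) (Fin n) ℝ) i j = 0 := by
  unfold ent; split <;> simp

lemma ent_add {n : ℕ} (X Y : Matrix (Fin n) (Fin n) ℝ) (i j : ℕ) :
    ent (X + Y) i j = ent X i j + ent Y i j := by
  unfold ent; split <;> simp [Matrix.add_apply]

lemma ent_smul {n : ℕ} (c : ℝ) (X : Matrix (Fin n) (Fin n) ℝ) (i j : ℕ) :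
    ent (c • X) i j = c * ent X i j := by
  unfold ent; split <;> simp [Matrix.smul_apply]

/-- The Lie algebra `𝔰𝔬(p,q)`, as a set of matrices. -/
def soSet (p q : ℕ) : Set (Matrix (Fin (p + q)) (Fin (p + q)) ℝ) :=
  {X | Xᵀ * Jmat p q + Jmat p q * X = 0}

lemma soSet_zero (p q : ℕ) : (0 : Matrix (Fin (p + q)) (Fin (p + q)) ℝ) ∈ soSet p q := by
  simp [soSet]

lemma soSet_add (p q : ℕ) {X Y : Matrix (Fin (p + q)) (Fin (p + q)) ℝ}
    (hX : X ∈ soSet p q) (hY : Y ∈ soSet p q) : X + Y ∈ soSet p q := by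
  simp only [soSet, Set.mem_setOf_eq] at *
  rw [Matrix.transpose_add, Matrix.add_mul, Matrix.mul_add,
    show Xᵀ * Jmat p q + Yᵀ * Jmat p q + (Jmat p q * X + Jmat p q * Y)
      = (Xᵀ * Jmat p q + Jmat p q * X) + (Yᵀ * Jmat p q + Jmat p q * Y) by abel,
    hX, hY, add_zero]

lemma soSet_smul (p q : ℕ) (c : ℝ) {X : Matrix (Fin (p + q)) (Fin (p + q)) ℝ}
    (hX : X ∈ soSet p q) : c • X ∈ soSet p q := by
  simp only [soSet, Set.mem_setOf_eq] at *
  rw [Matrix.transpose_smul, Matrix.smul_mul, Matrix.mul_smul, ← smul_add, hX, smul_zero]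

/-- The set `𝔭` of symmetric elements of `𝔰𝔬(p,q)` (Cartan decomposition). -/
def pSet (p q : ℕ) : Set (Matrix (Fin (p + q)) (Fin (p + q)) ℝ) :=
  {X | X ∈ soSet p q ∧ Xᵀ = X}

/-- The nilpotent Iwasawa factor `𝔫`, as a set of matrices; the conditions are the
entry conditions on the blocks `A`, `B`, `D` (1-based indices; `A i j = ent X i j`,
`B i l = ent X i (p + l)`, `D i j = ent X (p + i) (p + j)`). -/
def nSet (p q : ℕ) : Set (Matrix (Fin (p + q)) (Fin (p + q)) ℝ) :=
  {X | X ∈ soSet p q ∧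
    (∀ i j, 1 ≤ i → i ≤ p - q → 1 ≤ j → j ≤ p - q → ent X i j = 0) ∧
    (∀ l, 1 ≤ l → l ≤ q → ent X (p - l + 1) (p + l) = 0) ∧
    (∀ k l, 1 ≤ k → k ≤ p - q → 1 ≤ l → l ≤ q →
      ent X k (p - l + 1) = ent X k (p + l)) ∧
    (∀ i j, 1 ≤ i → i < j → j ≤ q →
      ent X (p + 1 - j) (p + 1 - i) = ent X (p + 1 - j) (p + i)) ∧
    (∀ i j, 1 ≤ i → i < j → j ≤ q →
      ent X (p + i) (p + j) = - ent X (p + 1 - i) (p + j))}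

/-- The abelian factor `𝔞`, as a set of matrices: all entries vanish except the
pairs in positions `(p-l+1, p+l)` and `(p+l, p-l+1)`, `1 ≤ l ≤ q`, which are equal. -/
def aSet (p q : ℕ) : Set (Matrix (Fin (p + q)) (Fin (p + q)) ℝ) :=
  {X | (∀ l, 1 ≤ l → l ≤ q → ent X (p - l + 1) (p + l) = ent X (p + l) (p - l + 1)) ∧
    (∀ i j, 1 ≤ i → i ≤ p + q → 1 ≤ j → j ≤ p + q →
      (¬ ∃ l, 1 ≤ l ∧ l ≤ q ∧ ((i = p - l + 1 ∧ j = p + l) ∨ (i = p + l ∧ j = p - l + 1))) →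
      ent X i j = 0)}

/-- `𝔨₀`: skew-symmetric upper-left `(p-q)×(p-q)` block, all other entries zero. -/
def kSet (p q : ℕ) : Set (Matrix (Fin (p + q)) (Fin (p + q)) ℝ) :=
  {X | (∀ i j, 1 ≤ i → i ≤ p - q → 1 ≤ j → j ≤ p - q → ent X i j = - ent X j i) ∧
    (∀ i j, 1 ≤ i → i ≤ p + q → 1 ≤ j → j ≤ p + q →
      ¬(i ≤ p - q ∧ j ≤ p - q) → ent X i j = 0)}

/-- The nilpotent Iwasawa factor `𝔫` as an `ℝ`-subspace of `M_{p+q}(ℝ)`. -/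
def nSub (p q : ℕ) : Submodule ℝ (Matrix (Fin (p + q)) (Fin (p + q)) ℝ) where
  carrier := nSet p q
  zero_mem' := by
    refine ⟨soSet_zero p q, ?_, ?_, ?_, ?_, ?_⟩ <;> intros <;> simp [ent_zero]
  add_mem' := by
    rintro X Y ⟨h0, h1, h2, h3, h4, h5⟩ ⟨g0, g1, g2, g3, g4, g5⟩
    refine ⟨soSet_add p q h0 g0, ?_, ?_, ?_, ?_, ?_⟩
    · intro i j hi hi' hj hj'
      rw [ent_add, h1 i j hi hi' hj hj', g1 i j hi hi' hj hj', add_zero]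
    · intro l hl hl'
      rw [ent_add, h2 l hl hl', g2 l hl hl', add_zero]
    · intro k l hk hk' hl hl'
      rw [ent_add, ent_add, h3 k l hk hk' hl hl', g3 k l hk hk' hl hl']
    · intro i j hi hij hj
      rw [ent_add, ent_add, h4 i j hi hij hj, g4 i j hi hij hj]
    · intro i j hi hij hj
      rw [ent_add, ent_add, h5 i j hi hij hj, g5 i j hi hij hj]; ring
  smul_mem' := by
    rintro c X ⟨h0, h1, h2, h3, h4, h5⟩
    refine ⟨soSet_smul p q c h0, ?_, ?_, ?_, ?_, ?_⟩
    · intro i j hi hi' hj hj'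
      rw [ent_smul, h1 i j hi hi' hj hj', mul_zero]
    · intro l hl hl'
      rw [ent_smul, h2 l hl hl', mul_zero]
    · intro k l hk hk' hl hl'
      rw [ent_smul, ent_smul, h3 k l hk hk' hl hl']
    · intro i j hi hij hj
      rw [ent_smul, ent_smul, h4 i j hi hij hj]
    · intro i j hi hij hj
      rw [ent_smul, ent_smul, h5 i j hi hij hj]; ring

/-- The abelian factor `𝔞` as an `ℝ`-subspace of `M_{p+q}(ℝ)`. -/
def aSub (p q : ℕ) : Submodule ℝ (Matrix (Fin (p + q)) (Fin (p + q)) ℝ) where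
  carrier := aSet p q
  zero_mem' := by
    refine ⟨?_, ?_⟩ <;> intros <;> simp [ent_zero]
  add_mem' := by
    rintro X Y ⟨h1, h2⟩ ⟨g1, g2⟩
    refine ⟨?_, ?_⟩
    · intro l hl hl'
      rw [ent_add, ent_add, h1 l hl hl', g1 l hl hl']
    · intro i j hi hi' hj hj' hne
      rw [ent_add, h2 i j hi hi' hj hj' hne, g2 i j hi hi' hj hj' hne, add_zero]
  smul_mem' := by
    rintro c X ⟨h1, h2⟩
    refine ⟨?_, ?_⟩
    · intro l hl hl'
      rw [ent_smul, ent_smul, h1 l hl hl']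
    · intro i j hi hi' hj hj' hne
      rw [ent_smul, h2 i j hi hi' hj hj' hne, mul_zero]

/-- `𝔨₀` as an `ℝ`-subspace of `M_{p+q}(ℝ)`. -/
def kSub (p q : ℕ) : Submodule ℝ (Matrix (Fin (p + q)) (Fin (p + q)) ℝ) where
  carrier := kSet p q
  zero_mem' := by
    refine ⟨?_, ?_⟩ <;> intros <;> simp [ent_zero]
  add_mem' := by
    rintro X Y ⟨h1, h2⟩ ⟨g1, g2⟩
    refine ⟨?_, ?_⟩
    · intro i j hi hi' hj hj'
      rw [ent_add, ent_add, h1 i j hi hi' hj hj', g1 i j hi hi' hj hj']; ring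
    · intro i j hi hi' hj hj' hne
      rw [ent_add, h2 i j hi hi' hj hj' hne, g2 i j hi hi' hj hj' hne, add_zero]
  smul_mem' := by
    rintro c X ⟨h1, h2⟩
    refine ⟨?_, ?_⟩
    · intro i j hi hi' hj hj'
      rw [ent_smul, ent_smul, h1 i j hi hi' hj hj']; ring
    · intro i j hi hi' hj hj' hne
      rw [ent_smul, h2 i j hi hi' hj hj' hne, mul_zero]

/-- The subspace `{X ∈ M_n(ℝ) : X x = 0}`. -/
def kerAt {n : ℕ} (x : Fin n → ℝ) : Submodule ℝ (Matrix (Fin n) (Fin n) ℝ) where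
  carrier := {X | X *ᵥ x = 0}
  zero_mem' := by simp [Matrix.zero_mulVec]
  add_mem' := by
    intro X Y hX hY
    simp only [Set.mem_setOf_eq] at *
    rw [Matrix.add_mulVec, hX, hY, add_zero]
  smul_mem' := by
    intro c X hX
    simp only [Set.mem_setOf_eq] at *
    rw [Matrix.smul_mulVec, hX, smul_zero]

/-- The exponential of a matrix, as a unit of `M_n(ℝ)`, i.e. an element of `GL(n, ℝ)`. -/
def expUnit {n : ℕ} (X : Matrix (Fin n) (Fin n) ℝ) : (Matrix (Fin n) (Fin n) ℝ)ˣ where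
  val := NormedSpace.exp X
  inv := NormedSpace.exp (-X)
  val_inv := by
    rw [← Matrix.exp_add_of_commute X (-X) (Commute.neg_right (Commute.refl X)),
      add_neg_cancel, NormedSpace.exp_zero]
  inv_val := by
    rw [← Matrix.exp_add_of_commute (-X) X (Commute.neg_left (Commute.refl X)),
      neg_add_cancel, NormedSpace.exp_zero]

/-- The subgroup `N = exp(𝔫)` of `GL(p+q, ℝ)` generated by exponentials of elements of `𝔫`. -/
def Ngrp (p q : ℕ) : Subgroup (Matrix (Fin (p + q)) (Fin (p + q)) ℝ)ˣ :=
  Subgroup.closure {g | ∃ X ∈ nSet p q, g = expUnit X}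

/-- The subgroup `AN` of `GL(p+q, ℝ)` generated by exponentials of elements of `𝔞 ∪ 𝔫`. -/
def ANgrp (p q : ℕ) : Subgroup (Matrix (Fin (p + q)) (Fin (p + q)) ℝ)ˣ :=
  Subgroup.closure {g | ∃ X ∈ aSet p q ∪ nSet p q, g = expUnit X}

/-- The subgroup `Q = K₀AN` of `GL(p+q, ℝ)` generated by exponentials of `𝔨₀ ∪ 𝔞 ∪ 𝔫`. -/
def Qgrp (p q : ℕ) : Subgroup (Matrix (Fin (p + q)) (Fin (p + q)) ℝ)ˣ :=
  Subgroup.closure {g | ∃ X ∈ kSet p q ∪ aSet p q ∪ nSet p q, g = expUnit X}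

/-- The orbit `G(x)` of a point `x ∈ ℝ^n` under a subgroup `G` of `GL(n, ℝ)`. -/
def orb {n : ℕ} (G : Subgroup (Matrix (Fin n) (Fin n) ℝ)ˣ) (x : Fin n → ℝ) :
    Set (Fin n → ℝ) :=
  {v | ∃ g ∈ G, (g : Matrix (Fin n) (Fin n) ℝ) *ᵥ x = v}

end

section InfraA

open Module Submodule

variable {n : ℕ}

lemma vent_eq (x : Fin n → ℝ) (i : ℕ) (h1 : 1 ≤ i) (h2 : i ≤ n) :
    vent x i = x ⟨i - 1, by omega⟩ := by
  unfold vent; rw [dif_pos (by omega)]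

lemma vent_apply (x : Fin n → ℝ) (r : Fin n) : x r = vent x ((r : ℕ) + 1) := by
  unfold vent; rw [dif_pos (by simp)]; exact congrArg x (by ext; simp)

lemma funext_vent {x y : Fin n → ℝ} (h : ∀ i, 1 ≤ i → i ≤ n → vent x i = vent y i) :
    x = y := by
  funext r; rw [vent_apply x r, vent_apply y r]; exact h _ (by omega) (by omega)

lemma vent_zero (i : ℕ) : vent (0 : Fin n → ℝ) i = 0 := by
  unfold vent; split <;> simp

lemma vent_add (x y : Fin n → ℝ) (i : ℕ) : vent (x + y) i = vent x i + vent y i := by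
  unfold vent; split <;> simp

lemma vent_sub (x y : Fin n → ℝ) (i : ℕ) : vent (x - y) i = vent x i - vent y i := by
  unfold vent; split <;> simp

lemma vent_smul (c : ℝ) (x : Fin n → ℝ) (i : ℕ) : vent (c • x) i = c * vent x i := by
  unfold vent; split <;> simp

/-- coordinate functional, 1-based -/
def ventL (n : ℕ) (i : ℕ) : (Fin n → ℝ) →ₗ[ℝ] ℝ where
  toFun x := vent x i
  map_add' x y := vent_add x y i
  map_smul' c x := vent_smul c x i

@[simp] lemma ventL_apply (i : ℕ) (x : Fin n → ℝ) : ventL n i x = vent x i := rfl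

lemma vent_stdE {i j : ℕ} (hj : 1 ≤ j) (hjn : j ≤ n) :
    vent (stdE n i) j = if j = i then 1 else 0 := by
  rw [vent_eq _ _ hj hjn]
  have : j - 1 + 1 = j := by omega
  simp [stdE, this]

end InfraA

section InfraB

open Module Submodule

variable {p q n : ℕ}

lemma ent_eq (X : Matrix (Fin n) (Fin n) ℝ) (i j : ℕ) (hi1 : 1 ≤ i) (hi2 : i ≤ n)
    (hj1 : 1 ≤ j) (hj2 : j ≤ n) :
    ent X i j = X ⟨i - 1, by omega⟩ ⟨j - 1, by omega⟩ := by
  unfold ent; rw [dif_pos ⟨by omega, by omega⟩]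

lemma ip_eq_dot (p q : ℕ) (x y : Fin (p + q) → ℝ) :
    ip p q x y = x ⬝ᵥ (Jmat p q *ᵥ y) := by
  unfold ip Jmat dotProduct
  refine Finset.sum_congr rfl fun i _ => ?_
  rw [Matrix.mulVec_diagonal]; ring

lemma ip_comm (x y : Fin (p + q) → ℝ) : ip p q x y = ip p q y x := by
  unfold ip; exact Finset.sum_congr rfl fun i _ => by ring

lemma ip_add_right (x y z : Fin (p + q) → ℝ) :
    ip p q x (y + z) = ip p q x y + ip p q x z := by
  unfold ip; rw [← Finset.sum_add_distrib]
  refine Finset.sum_congr rfl fun i _ => ?_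
  simp only [Pi.add_apply]; split_ifs <;> ring

lemma ip_sub_right (x y z : Fin (p + q) → ℝ) :
    ip p q x (y - z) = ip p q x y - ip p q x z := by
  unfold ip; rw [← Finset.sum_sub_distrib]
  refine Finset.sum_congr rfl fun i _ => ?_
  simp only [Pi.sub_apply]; split_ifs <;> ring

lemma ip_smul_right (c : ℝ) (x y : Fin (p + q) → ℝ) :
    ip p q x (c • y) = c * ip p q x y := by
  unfold ip; rw [Finset.mul_sum]
  refine Finset.sum_congr rfl fun i _ => ?_
  simp only [Pi.smul_apply, smul_eq_mul]; split_ifs <;> ring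

/-- `ip` as a linear functional in the second argument. -/
def ipL (p q : ℕ) (x : Fin (p + q) → ℝ) : (Fin (p + q) → ℝ) →ₗ[ℝ] ℝ where
  toFun y := ip p q x y
  map_add' y z := ip_add_right x y z
  map_smul' c y := ip_smul_right c x y

@[simp] lemma ipL_apply (x y : Fin (p + q) → ℝ) : ipL p q x y = ip p q x y := rfl

/-- `ip` as a linear functional in the first argument. -/
def ipR (p q : ℕ) (z : Fin (p + q) → ℝ) : (Fin (p + q) → ℝ) →ₗ[ℝ] ℝ where
  toFun y := ip p q y z
  map_add' y w := by
    show ip p q (y + w) z = ip p q y z + ip p q w z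
    rw [ip_comm, ip_comm y, ip_comm w]; exact ip_add_right z y w
  map_smul' c y := by
    show ip p q (c • y) z = c * ip p q y z
    rw [ip_comm, ip_comm y]; exact ip_smul_right c z y

@[simp] lemma ipR_apply (z y : Fin (p + q) → ℝ) : ipR p q z y = ip p q y z := rfl

lemma soSet_ip {X : Matrix (Fin (p + q)) (Fin (p + q)) ℝ} (hX : X ∈ soSet p q)
    (u v : Fin (p + q) → ℝ) :
    ip p q (X *ᵥ u) v = - ip p q u (X *ᵥ v) := by
  have h : Xᵀ * Jmat p q = -(Jmat p q * X) := by
    have h0 : Xᵀ * Jmat p q + Jmat p q * X = 0 := hX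
    rw [add_eq_zero_iff_eq_neg] at h0; exact h0
  rw [ip_eq_dot, ip_eq_dot]
  have h1 : (X *ᵥ u) ⬝ᵥ (Jmat p q *ᵥ v) = u ⬝ᵥ (Xᵀ *ᵥ (Jmat p q *ᵥ v)) := by
    rw [dotProduct_comm, Matrix.dotProduct_mulVec, dotProduct_comm,
      Matrix.mulVec_transpose]
  rw [h1, Matrix.mulVec_mulVec, h, Matrix.neg_mulVec, dotProduct_neg,
    ← Matrix.mulVec_mulVec]

lemma ip_self_eq_zero {X : Matrix (Fin (p + q)) (Fin (p + q)) ℝ} (hX : X ∈ soSet p q)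
    (x : Fin (p + q) → ℝ) : ip p q (X *ᵥ x) x = 0 := by
  have h := soSet_ip hX x x
  rw [ip_comm x (X *ᵥ x)] at h
  linarith

lemma ip_stdE (x : Fin (p + q) → ℝ) (j : ℕ) (h1 : 1 ≤ j) (h2 : j ≤ p + q) :
    ip p q x (stdE (p + q) j) = (if j ≤ p then 1 else -1) * vent x j := by
  unfold ip
  rw [Finset.sum_eq_single ⟨j - 1, by omega⟩]
  · have e3 : stdE (p + q) j ⟨j - 1, by omega⟩ = 1 := by
      simp only [stdE, Fin.val_mk]; rw [if_pos (by omega)]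
    rw [vent_eq x j h1 h2, e3, mul_one]
    congr 1
    simp only [Fin.val_mk, show ((j : ℕ) - 1 < p) ↔ (j ≤ p) from by omega]
  · intro i _ hi
    have : ¬ ((i : ℕ) + 1 = j) := by
      intro h; apply hi; ext; simp; omega
    simp [stdE, this]
  · intro h; exact absurd (Finset.mem_univ _) h

lemma ip_wVec (x : Fin (p + q) → ℝ) (b : ℕ) (hb1 : 1 ≤ b) (hb2 : b ≤ q) (hpq : q ≤ p) :
    ip p q x (wVec p q b) = vent x (p - b + 1) + vent x (p + b) := by
  unfold wVec
  rw [ip_sub_right, ip_stdE x _ (by omega) (by omega), ip_stdE x _ (by omega) (by omega)]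
  rw [if_pos (by omega), if_neg (by omega)]; ring

lemma ip_vVec (x : Fin (p + q) → ℝ) (b : ℕ) (hb1 : 1 ≤ b) (hb2 : b ≤ q) (hpq : q ≤ p) :
    ip p q x (vVec p q b) = vent x (p - b + 1) - vent x (p + b) := by
  unfold vVec
  rw [ip_add_right, ip_stdE x _ (by omega) (by omega), ip_stdE x _ (by omega) (by omega)]
  rw [if_pos (by omega), if_neg (by omega)]; ring

lemma mulVec_stdE (X : Matrix (Fin n) (Fin n) ℝ) (j : ℕ) (h1 : 1 ≤ j) (h2 : j ≤ n)
    (i : ℕ) (hi1 : 1 ≤ i) (hi2 : i ≤ n) :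
    vent (X *ᵥ stdE n j) i = ent X i j := by
  rw [vent_eq _ _ hi1 hi2, ent_eq X i j hi1 hi2 h1 h2]
  show (X *ᵥ stdE n j) _ = _
  unfold Matrix.mulVec dotProduct
  rw [Finset.sum_eq_single ⟨j - 1, by omega⟩]
  · have e1 : (j : ℕ) - 1 + 1 = j := by omega
    simp [stdE, e1]
  · intro c _ hc
    have : ¬ ((c : ℕ) + 1 = j) := by
      intro h; apply hc; ext; simp; omega
    simp [stdE, this]
  · intro h; exact absurd (Finset.mem_univ _) h

end InfraB

section InfraC

variable {p q n : ℕ}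

/-- Matrix with single entry 1 at 1-based position (i,j). -/
def Emat (n i j : ℕ) : Matrix (Fin n) (Fin n) ℝ :=
  Matrix.of fun r c => if (r : ℕ) + 1 = i ∧ (c : ℕ) + 1 = j then 1 else 0

lemma Emat_apply (i j : ℕ) (r c : Fin n) :
    Emat n i j r c = if (r : ℕ) + 1 = i ∧ (c : ℕ) + 1 = j then 1 else 0 := rfl

lemma ent_Emat (i j i' j' : ℕ) (hi : 1 ≤ i') (hi2 : i' ≤ n) (hj : 1 ≤ j') (hj2 : j' ≤ n) :
    ent (Emat n i j) i' j' = if i' = i ∧ j' = j then 1 else 0 := by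
  rw [ent_eq _ _ _ hi hi2 hj hj2, Emat_apply]
  simp only [Fin.val_mk]
  congr 1
  simp only [eq_iff_iff]
  omega

lemma Emat_mulVec (i j : ℕ) (hj : 1 ≤ j) (x : Fin n → ℝ) :
    Emat n i j *ᵥ x = vent x j • stdE n i := by
  funext r
  show ∑ c, Emat n i j r c * x c = _
  by_cases hr : (r : ℕ) + 1 = i
  · by_cases hjn : j ≤ n
    · rw [Finset.sum_eq_single ⟨j - 1, by omega⟩]
      · rw [Emat_apply, if_pos ⟨hr, by simp only [Fin.val_mk]; omega⟩, one_mul,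
          vent_eq x j hj hjn]
        simp [stdE, hr]
      · intro c _ hc
        rw [Emat_apply, if_neg, zero_mul]
        rintro ⟨-, h2⟩
        exact hc (by ext; simp only [Fin.val_mk]; omega)
      · intro h; exact absurd (Finset.mem_univ _) h
    · have hv : vent x j = 0 := by unfold vent; rw [dif_neg (by omega)]
      rw [hv, zero_smul]
      refine Finset.sum_eq_zero fun c _ => ?_
      rw [Emat_apply, if_neg (by rintro ⟨-, h2⟩; omega), zero_mul]
      
  · have : stdE n i r = 0 := by simp [stdE, hr]
    simp only [Pi.smul_apply, this, smul_eq_mul, mul_zero]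
    refine Finset.sum_eq_zero fun c _ => ?_
    rw [Emat_apply, if_neg (by rintro ⟨h1, -⟩; exact hr h1), zero_mul]

/-- Entrywise criterion for membership in `soSet`. -/
lemma soSet_iff (X : Matrix (Fin (p + q)) (Fin (p + q)) ℝ) :
    X ∈ soSet p q ↔ ∀ r c : Fin (p + q),
      X c r * (if (c : ℕ) < p then (1:ℝ) else -1) + (if (r : ℕ) < p then (1:ℝ) else -1) * X r c = 0 := by
  constructor
  · intro hX r c
    have h0 : Xᵀ * Jmat p q + Jmat p q * X = 0 := hX
    have := congrFun (congrFun h0 r) c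
    simpa [Jmat, Matrix.mul_diagonal, Matrix.diagonal_mul, Matrix.transpose_apply] using this
  · intro h
    show Xᵀ * Jmat p q + Jmat p q * X = 0
    ext r c
    simpa [Jmat, Matrix.mul_diagonal, Matrix.diagonal_mul, Matrix.transpose_apply] using h r c

/-- 1-based entry consequences of `soSet` membership. -/
lemma soSet_ent {X : Matrix (Fin (p + q)) (Fin (p + q)) ℝ} (hX : X ∈ soSet p q)
    (i j : ℕ) (hi1 : 1 ≤ i) (hi2 : i ≤ p + q) (hj1 : 1 ≤ j) (hj2 : j ≤ p + q) :
    ent X j i * (if j ≤ p then (1:ℝ) else -1) + (if i ≤ p then (1:ℝ) else -1) * ent X i j = 0 := by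
  have h := (soSet_iff X).1 hX ⟨i - 1, by omega⟩ ⟨j - 1, by omega⟩
  rw [ent_eq X j i hj1 hj2 hi1 hi2, ent_eq X i j hi1 hi2 hj1 hj2]
  simp only [Fin.val_mk, show ((j:ℕ) - 1 < p) ↔ (j ≤ p) from by omega,
    show ((i:ℕ) - 1 < p) ↔ (i ≤ p) from by omega] at h
  exact h

lemma so_skew {X : Matrix (Fin (p + q)) (Fin (p + q)) ℝ} (hX : X ∈ soSet p q)
    {i j : ℕ} (hi1 : 1 ≤ i) (hi2 : i ≤ p) (hj1 : 1 ≤ j) (hj2 : j ≤ p) :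
    ent X j i = - ent X i j := by
  have h := soSet_ent hX i j hi1 (by omega) hj1 (by omega)
  rw [if_pos hi2, if_pos hj2] at h; linarith

lemma so_skew' {X : Matrix (Fin (p + q)) (Fin (p + q)) ℝ} (hX : X ∈ soSet p q)
    {i j : ℕ} (hi1 : p + 1 ≤ i) (hi2 : i ≤ p + q) (hj1 : p + 1 ≤ j) (hj2 : j ≤ p + q) :
    ent X j i = - ent X i j := by
  have h := soSet_ent hX i j (by omega) hi2 (by omega) hj2
  rw [if_neg (by omega), if_neg (by omega)] at h; linarith

lemma so_sym {X : Matrix (Fin (p + q)) (Fin (p + q)) ℝ} (hX : X ∈ soSet p q)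
    {i j : ℕ} (hi1 : 1 ≤ i) (hi2 : i ≤ p) (hj1 : p + 1 ≤ j) (hj2 : j ≤ p + q) :
    ent X j i = ent X i j := by
  have h := soSet_ent hX i j hi1 (by omega) (by omega) hj2
  rw [if_neg (by omega), if_pos hi2] at h; linarith

lemma so_diag {X : Matrix (Fin (p + q)) (Fin (p + q)) ℝ} (hX : X ∈ soSet p q)
    {i : ℕ} (hi1 : 1 ≤ i) (hi2 : i ≤ p + q) : ent X i i = 0 := by
  have h := soSet_ent hX i i hi1 hi2 hi1 hi2
  by_cases hp : i ≤ p
  · rw [if_pos hp] at h; linarith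
  · rw [if_neg hp] at h; linarith

/-- symmetric pair with mixed signature is in soSet -/
lemma soSet_symPair (p q i j : ℕ) (hi1 : 1 ≤ i) (hi2 : i ≤ p) (hj1 : p + 1 ≤ j)
    (hj2 : j ≤ p + q) :
    Emat (p + q) i j + Emat (p + q) j i ∈ soSet p q := by
  rw [soSet_iff]
  intro r c
  simp only [Matrix.add_apply, Emat_apply]
  split_ifs <;> first | ring1 | (exfalso; omega)

/-- skew pair with equal signature is in soSet -/
lemma soSet_skewPair (p q i j : ℕ) (hi1 : 1 ≤ i) (hj1 : 1 ≤ j) (hi2 : i ≤ p + q)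
    (hj2 : j ≤ p + q) (hsgn : (i ≤ p ∧ j ≤ p) ∨ (p + 1 ≤ i ∧ p + 1 ≤ j)) :
    Emat (p + q) i j - Emat (p + q) j i ∈ soSet p q := by
  rw [soSet_iff]
  intro r c
  simp only [Matrix.sub_apply, Emat_apply]
  split_ifs <;> first | ring1 | (exfalso; omega)

lemma kSet_subset_soSet {X : Matrix (Fin (p + q)) (Fin (p + q)) ℝ} (hpq : q ≤ p)
    (hX : X ∈ kSet p q) : X ∈ soSet p q := by
  obtain ⟨h1, h2⟩ := hX
  rw [soSet_iff]
  intro r c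
  have er : X r c = ent X ((r:ℕ)+1) ((c:ℕ)+1) := by
    rw [ent_eq _ _ _ (by omega) (by omega) (by omega) (by omega)]
    congr 1 <;> · ext; simp
  have ec : X c r = ent X ((c:ℕ)+1) ((r:ℕ)+1) := by
    rw [ent_eq _ _ _ (by omega) (by omega) (by omega) (by omega)]
    congr 1 <;> · ext; simp
  by_cases hc : (r:ℕ) + 1 ≤ p - q ∧ (c:ℕ) + 1 ≤ p - q
  · rw [if_pos (by omega), if_pos (by omega), er, ec,
      h1 _ _ (by omega) hc.1 (by omega) hc.2]
    ring
  · rw [er, ec, h2 _ _ (by omega) (by omega) (by omega) (by omega) (by omega),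
      h2 _ _ (by omega) (by omega) (by omega) (by omega) (by omega)]
    ring

lemma aSet_subset_soSet {X : Matrix (Fin (p + q)) (Fin (p + q)) ℝ} (hpq : q ≤ p)
    (hX : X ∈ aSet p q) : X ∈ soSet p q := by
  obtain ⟨h1, h2⟩ := hX
  rw [soSet_iff]
  intro r c
  have er : X r c = ent X ((r:ℕ)+1) ((c:ℕ)+1) := by
    rw [ent_eq _ _ _ (by omega) (by omega) (by omega) (by omega)]
    congr 1 <;> · ext; simp
  have ec : X c r = ent X ((c:ℕ)+1) ((r:ℕ)+1) := by
    rw [ent_eq _ _ _ (by omega) (by omega) (by omega) (by omega)]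
    congr 1 <;> · ext; simp
  by_cases hc : ∃ l, 1 ≤ l ∧ l ≤ q ∧
      (((r:ℕ)+1 = p - l + 1 ∧ (c:ℕ)+1 = p + l) ∨ ((r:ℕ)+1 = p + l ∧ (c:ℕ)+1 = p - l + 1))
  · obtain ⟨l, hl1, hl2, hor⟩ := hc
    have key := h1 l hl1 hl2
    rcases hor with ⟨hr', hc'⟩ | ⟨hr', hc'⟩
    · rw [if_neg (by omega), if_pos (by omega), er, ec, hr', hc', key]; ring
    · rw [if_pos (by omega), if_neg (by omega), er, ec, hr', hc', key]; ring
  · rw [er, ec, h2 _ _ (by omega) (by omega) (by omega) (by omega) hc,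
      h2 _ _ (by omega) (by omega) (by omega) (by omega)
        (by rintro ⟨l, hl1, hl2, h | h⟩
            · exact hc ⟨l, hl1, hl2, Or.inr ⟨h.2, h.1⟩⟩
            · exact hc ⟨l, hl1, hl2, Or.inl ⟨h.2, h.1⟩⟩)]
    ring

end InfraC

section InfraD

variable {p q : ℕ}

/-- The flag subspace `F_a = span{w_1, ..., w_a}`, described by linear conditions. -/
def Fsub (p q a : ℕ) : Submodule ℝ (Fin (p + q) → ℝ) where
  carrier := {y | (∀ j, 1 ≤ j → j ≤ p - q → vent y j = 0) ∧
    (∀ b, 1 ≤ b → b ≤ q → vent y (p - b + 1) + vent y (p + b) = 0) ∧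
    (∀ b, a < b → b ≤ q → vent y (p + b) = 0)}
  zero_mem' := ⟨fun j _ _ => vent_zero j, fun b _ _ => by rw [vent_zero, vent_zero, add_zero],
    fun b _ _ => vent_zero _⟩
  add_mem' := by
    rintro y z ⟨h1, h2, h3⟩ ⟨g1, g2, g3⟩
    refine ⟨fun j a b => ?_, fun b hb1 hb2 => ?_, fun b hb1 hb2 => ?_⟩
    · rw [vent_add, h1 j a b, g1 j a b, add_zero]
    · rw [vent_add, vent_add]
      have := h2 b hb1 hb2; have := g2 b hb1 hb2; linarith
    · rw [vent_add, h3 b hb1 hb2, g3 b hb1 hb2, add_zero]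
  smul_mem' := by
    rintro c y ⟨h1, h2, h3⟩
    refine ⟨fun j a b => ?_, fun b hb1 hb2 => ?_, fun b hb1 hb2 => ?_⟩
    · rw [vent_smul, h1 j a b, mul_zero]
    · rw [vent_smul, vent_smul]
      have h := h2 b hb1 hb2
      have e : c * vent y (p - b + 1) + c * vent y (p + b)
          = c * (vent y (p - b + 1) + vent y (p + b)) := by ring
      rw [e, h, mul_zero]
    · rw [vent_smul, h3 b hb1 hb2, mul_zero]

lemma mem_Fsub {a : ℕ} {y : Fin (p + q) → ℝ} :
    y ∈ Fsub p q a ↔ (∀ j, 1 ≤ j → j ≤ p - q → vent y j = 0) ∧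
    (∀ b, 1 ≤ b → b ≤ q → vent y (p - b + 1) + vent y (p + b) = 0) ∧
    (∀ b, a < b → b ≤ q → vent y (p + b) = 0) := Iff.rfl

lemma Fsub_mono {a a' : ℕ} (h : a ≤ a') : Fsub p q a ≤ Fsub p q a' := by
  rintro y ⟨h1, h2, h3⟩
  exact ⟨h1, h2, fun b hb1 hb2 => h3 b (by omega) hb2⟩

lemma wVec_mem_Fsub (hq : 1 ≤ q) (hpq : q ≤ p) {b a : ℕ} (hb1 : 1 ≤ b) (hb2 : b ≤ a)
    (ha : a ≤ q) : wVec p q b ∈ Fsub p q a := by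
  refine ⟨fun j hj1 hj2 => ?_, fun c hc1 hc2 => ?_, fun c hc1 hc2 => ?_⟩
  · unfold wVec
    rw [vent_sub, vent_stdE hj1 (by omega), vent_stdE hj1 (by omega),
      if_neg (by omega), if_neg (by omega), sub_zero]
  · unfold wVec
    rw [vent_sub, vent_sub, vent_stdE (by omega) (by omega), vent_stdE (by omega) (by omega),
      vent_stdE (by omega) (by omega), vent_stdE (by omega) (by omega)]
    by_cases hcb : c = b
    · rw [if_pos (by omega), if_neg (by omega), if_neg (by omega), if_pos (by omega)]; ring
    · rw [if_neg (by omega), if_neg (by omega), if_neg (by omega), if_neg (by omega)]; ring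
  · unfold wVec
    rw [vent_sub, vent_stdE (by omega) (by omega), vent_stdE (by omega) (by omega),
      if_neg (by omega), if_neg (by omega), sub_zero]

/-- Main decomposition: every element of `Fsub p q a` is the explicit combination of the
`w`-vectors. -/
lemma Fsub_eq_comb (hq : 1 ≤ q) (hpq : q ≤ p) {a : ℕ} (ha : a ≤ q) {y : Fin (p + q) → ℝ}
    (hy : y ∈ Fsub p q a) :
    y = ∑ c ∈ Finset.Icc 1 a, vent y (p - c + 1) • wVec p q c := by
  obtain ⟨h1, h2, h3⟩ := hy
  funext r
  rw [Finset.sum_apply]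
  have hterm : ∀ c, (vent y (p - c + 1) • wVec p q c) r
      = vent y (p - c + 1) * ((if (r:ℕ) + 1 = p - c + 1 then 1 else 0)
        - (if (r:ℕ) + 1 = p + c then 1 else 0)) := by
    intro c
    simp only [Pi.smul_apply, wVec, Pi.sub_apply, smul_eq_mul, stdE]
  have hr : (r : ℕ) < p + q := r.isLt
  rcases le_or_gt ((r:ℕ) + 1) (p - q) with hm | hm
  · rw [Finset.sum_eq_zero, vent_apply y r, h1 _ (by omega) hm]
    intro c hc
    simp only [Finset.mem_Icc] at hc
    rw [hterm, if_neg (by omega), if_neg (by omega)]; ring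
  · rcases le_or_gt ((r:ℕ) + 1) p with hm2 | hm2
    · -- r+1 = p - c0 + 1 with c0 = p - r
      set c0 : ℕ := p - (r:ℕ) with hc0
      have hc01 : 1 ≤ c0 := by omega
      have hc0q : c0 ≤ q := by omega
      by_cases hle : c0 ≤ a
      · rw [Finset.sum_eq_single c0]
        · rw [hterm, if_pos (by omega), if_neg (by omega), vent_apply y r]
          have : p - c0 + 1 = (r:ℕ) + 1 := by omega
          rw [this]; ring
        · intro c hc hne
          simp only [Finset.mem_Icc] at hc
          rw [hterm, if_neg (by omega), if_neg (by omega)]; ring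
        · intro h; exact absurd (Finset.mem_Icc.2 ⟨hc01, hle⟩) h
      · rw [Finset.sum_eq_zero, vent_apply y r]
        · have e1 : (r:ℕ) + 1 = p - c0 + 1 := by omega
          have e2 := h2 c0 hc01 hc0q
          have e3 := h3 c0 (by omega) hc0q
          rw [e1]; linarith
        · intro c hc
          simp only [Finset.mem_Icc] at hc
          rw [hterm, if_neg (by omega), if_neg (by omega)]; ring
    · -- r+1 = p + c0 with c0 = r+1-p
      set c0 : ℕ := (r:ℕ) + 1 - p with hc0
      have hc01 : 1 ≤ c0 := by omega
      have hc0q : c0 ≤ q := by omega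
      by_cases hle : c0 ≤ a
      · rw [Finset.sum_eq_single c0]
        · rw [hterm, if_neg (by omega), if_pos (by omega), vent_apply y r]
          have e2 := h2 c0 hc01 hc0q
          have : p + c0 = (r:ℕ) + 1 := by omega
          rw [← this]; linarith
        · intro c hc hne
          simp only [Finset.mem_Icc] at hc
          rw [hterm, if_neg (by omega), if_neg (by omega)]; ring
        · intro h; exact absurd (Finset.mem_Icc.2 ⟨hc01, hle⟩) h
      · rw [Finset.sum_eq_zero, vent_apply y r]
        · have e3 := h3 c0 (by omega) hc0q
          have : p + c0 = (r:ℕ) + 1 := by omega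
          rw [← this]; exact e3
        · intro c hc
          simp only [Finset.mem_Icc] at hc
          rw [hterm, if_neg (by omega), if_neg (by omega)]; ring

lemma Fsub_le_span (hq : 1 ≤ q) (hpq : q ≤ p) {a : ℕ} (ha : a ≤ q) :
    Fsub p q a ≤ Submodule.span ℝ (wVec p q '' {c | 1 ≤ c ∧ c ≤ a}) := by
  intro y hy
  rw [Fsub_eq_comb hq hpq ha hy]
  refine Submodule.sum_mem _ fun c hc => Submodule.smul_mem _ _ ?_
  simp only [Finset.mem_Icc] at hc
  exact Submodule.subset_span ⟨c, ⟨hc.1, hc.2⟩, rfl⟩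

/-- If all the pair-sums of `x` up to `a` vanish, then `ip x ·` vanishes on `Fsub p q a`. -/
lemma ip_eq_zero_of_mem_Fsub (hq : 1 ≤ q) (hpq : q ≤ p) {a : ℕ} (ha : a ≤ q)
    {x : Fin (p + q) → ℝ} (hx : ∀ c, 1 ≤ c → c ≤ a → vent x (p - c + 1) + vent x (p + c) = 0)
    {y : Fin (p + q) → ℝ} (hy : y ∈ Fsub p q a) : ip p q x y = 0 := by
  have h := Fsub_le_span hq hpq ha hy
  have hker : Submodule.span ℝ (wVec p q '' {c | 1 ≤ c ∧ c ≤ a}) ≤ LinearMap.ker (ipL p q x) := by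
    rw [Submodule.span_le]
    rintro z ⟨c, ⟨hc1, hc2⟩, rfl⟩
    simp only [SetLike.mem_coe, LinearMap.mem_ker, ipL_apply]
    rw [ip_wVec x c hc1 (by omega) hpq]
    exact hx c hc1 hc2
  have := hker h
  simpa using this

end InfraD

section InfraE

variable {p q : ℕ}

lemma vent_mulVec_wVec (X : Matrix (Fin (p + q)) (Fin (p + q)) ℝ) {a : ℕ} (ha1 : 1 ≤ a)
    (ha2 : a ≤ q) (hpq : q ≤ p) {i : ℕ} (hi1 : 1 ≤ i) (hi2 : i ≤ p + q) :
    vent (X *ᵥ wVec p q a) i = ent X i (p - a + 1) - ent X i (p + a) := by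
  unfold wVec
  rw [Matrix.mulVec_sub, vent_sub, mulVec_stdE X _ (by omega) (by omega) i hi1 hi2,
    mulVec_stdE X _ (by omega) (by omega) i hi1 hi2]

lemma flag_n (hq : 1 ≤ q) (hpq : q ≤ p) {X : Matrix (Fin (p + q)) (Fin (p + q)) ℝ}
    (hX : X ∈ nSet p q) {a : ℕ} (ha1 : 1 ≤ a) (ha2 : a ≤ q) :
    X *ᵥ wVec p q a ∈ Fsub p q a := by
  obtain ⟨hso, c1, c2, c3, c4, c5⟩ := hX
  have ea : p + 1 - a = p - a + 1 := by omega
  refine ⟨fun j hj1 hj2 => ?_, fun b hb1 hb2 => ?_, fun b hab hb2 => ?_⟩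
  · rw [vent_mulVec_wVec X ha1 ha2 hpq hj1 (by omega),
      c3 j a hj1 hj2 ha1 ha2, sub_self]
  · rw [vent_mulVec_wVec X ha1 ha2 hpq (by omega) (by omega),
      vent_mulVec_wVec X ha1 ha2 hpq (by omega) (by omega)]
    have eb : p + 1 - b = p - b + 1 := by omega
    have hsym : ent X (p + b) (p - a + 1) = ent X (p - a + 1) (p + b) :=
      so_sym hso (by omega) (by omega) (by omega) (by omega)
    rcases lt_trichotomy b a with h | h | h
    · have h4 := c4 b a hb1 h ha2
      have h5 := c5 b a hb1 h ha2
      simp only [ea, eb] at h4 h5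
      have hskew : ent X (p - b + 1) (p - a + 1) = - ent X (p - a + 1) (p - b + 1) :=
        so_skew hso (by omega) (by omega) (by omega) (by omega)
      rw [hskew, h4, hsym, h5]; ring
    · subst h
      have d1 : ent X (p - b + 1) (p - b + 1) = 0 := so_diag hso (by omega) (by omega)
      have d2 : ent X (p + b) (p + b) = 0 := so_diag hso (by omega) (by omega)
      have z := c2 b hb1 hb2
      rw [d1, d2, z, hsym, z]; ring
    · have h4 := c4 a b ha1 h hb2
      have h5 := c5 a b ha1 h hb2
      simp only [ea, eb] at h4 h5
      have hskewD : ent X (p + b) (p + a) = - ent X (p + a) (p + b) :=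
        so_skew' hso (by omega) (by omega) (by omega) (by omega)
      rw [h4, hsym, hskewD, h5]; ring
  · rw [vent_mulVec_wVec X ha1 ha2 hpq (by omega) (by omega)]
    have ea2 : p + 1 - a = p - a + 1 := by omega
    have h5 := c5 a b ha1 hab hb2
    simp only [ea2] at h5
    have hsym : ent X (p + b) (p - a + 1) = ent X (p - a + 1) (p + b) :=
      so_sym hso (by omega) (by omega) (by omega) (by omega)
    have hskewD : ent X (p + b) (p + a) = - ent X (p + a) (p + b) :=
      so_skew' hso (by omega) (by omega) (by omega) (by omega)
    rw [hsym, hskewD, h5]; ring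

lemma flag_k (hq : 1 ≤ q) (hpq : q ≤ p) {X : Matrix (Fin (p + q)) (Fin (p + q)) ℝ}
    (hX : X ∈ kSet p q) {a : ℕ} (ha1 : 1 ≤ a) (ha2 : a ≤ q) :
    X *ᵥ wVec p q a = 0 := by
  obtain ⟨h1, h2⟩ := hX
  apply funext_vent
  intro i hi1 hi2
  rw [vent_mulVec_wVec X ha1 ha2 hpq hi1 hi2, vent_zero,
    h2 i (p - a + 1) hi1 hi2 (by omega) (by omega) (by omega),
    h2 i (p + a) hi1 hi2 (by omega) (by omega) (by omega), sub_zero]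

lemma flag_a (hq : 1 ≤ q) (hpq : q ≤ p) {X : Matrix (Fin (p + q)) (Fin (p + q)) ℝ}
    (hX : X ∈ aSet p q) {a : ℕ} (ha1 : 1 ≤ a) (ha2 : a ≤ q) :
    X *ᵥ wVec p q a ∈ Fsub p q a := by
  obtain ⟨h1, h2⟩ := hX
  have key := h1 a ha1 ha2
  refine ⟨fun j hj1 hj2 => ?_, fun b hb1 hb2 => ?_, fun b hab hb2 => ?_⟩
  · rw [vent_mulVec_wVec X ha1 ha2 hpq hj1 (by omega),
      h2 j (p - a + 1) hj1 (by omega) (by omega) (by omega)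
        (by rintro ⟨l, hl1, hl2, h | h⟩ <;> omega),
      h2 j (p + a) hj1 (by omega) (by omega) (by omega)
        (by rintro ⟨l, hl1, hl2, h | h⟩ <;> omega), sub_zero]
  · rw [vent_mulVec_wVec X ha1 ha2 hpq (by omega) (by omega),
      vent_mulVec_wVec X ha1 ha2 hpq (by omega) (by omega)]
    by_cases hba : b = a
    · subst hba
      rw [h2 (p - b + 1) (p - b + 1) (by omega) (by omega) (by omega) (by omega)
          (by rintro ⟨l, hl1, hl2, h | h⟩ <;> omega),
        h2 (p + b) (p + b) (by omega) (by omega) (by omega) (by omega)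
          (by rintro ⟨l, hl1, hl2, h | h⟩ <;> omega), key]
      ring
    · rw [h2 (p - b + 1) (p - a + 1) (by omega) (by omega) (by omega) (by omega)
          (by rintro ⟨l, hl1, hl2, h | h⟩ <;> omega),
        h2 (p - b + 1) (p + a) (by omega) (by omega) (by omega) (by omega)
          (by rintro ⟨l, hl1, hl2, h | h⟩ <;> omega),
        h2 (p + b) (p - a + 1) (by omega) (by omega) (by omega) (by omega)
          (by rintro ⟨l, hl1, hl2, h | h⟩ <;> omega),
        h2 (p + b) (p + a) (by omega) (by omega) (by omega) (by omega)
          (by rintro ⟨l, hl1, hl2, h | h⟩ <;> omega)]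
      ring
  · rw [vent_mulVec_wVec X ha1 ha2 hpq (by omega) (by omega),
      h2 (p + b) (p - a + 1) (by omega) (by omega) (by omega) (by omega)
        (by rintro ⟨l, hl1, hl2, h | h⟩ <;> omega),
      h2 (p + b) (p + a) (by omega) (by omega) (by omega) (by omega)
        (by rintro ⟨l, hl1, hl2, h | h⟩ <;> omega), sub_zero]

end InfraE

section InfraF

open Module

variable {p q n : ℕ}

/-- `X ↦ X *ᵥ x` as a linear map. -/
def mulVecAt (n : ℕ) (x : Fin n → ℝ) : Matrix (Fin n) (Fin n) ℝ →ₗ[ℝ] (Fin n → ℝ) where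
  toFun X := X *ᵥ x
  map_add' X Y := Matrix.add_mulVec X Y x
  map_smul' c X := Matrix.smul_mulVec c X x

@[simp] lemma mulVecAt_apply (x : Fin n → ℝ) (X : Matrix (Fin n) (Fin n) ℝ) :
    mulVecAt n x X = X *ᵥ x := rfl

lemma ker_mulVecAt (x : Fin n → ℝ) : LinearMap.ker (mulVecAt n x) = kerAt x := by
  ext X
  simp only [LinearMap.mem_ker, mulVecAt_apply]
  exact Iff.rfl

set_option synthInstance.maxHeartbeats 1000000 in
/-- Rank-nullity bridge: the quantity in the theorem equals the dimension of the image
of the subalgebra under `X ↦ X x`. -/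
lemma rank_bridge (G : Submodule ℝ (Matrix (Fin n) (Fin n) ℝ)) (x : Fin n → ℝ) :
    finrank ℝ G - finrank ℝ ↥(G ⊓ kerAt x) = finrank ℝ ↥(G.map (mulVecAt n x)) := by
  have h := LinearMap.finrank_range_add_finrank_ker ((mulVecAt n x).domRestrict G)
  rw [LinearMap.range_domRestrict] at h
  have hker : LinearMap.ker ((mulVecAt n x).domRestrict G)
      = Submodule.comap G.subtype (G ⊓ kerAt x) := by
    rw [LinearMap.ker_domRestrict, ker_mulVecAt, Submodule.comap_inf,
      Submodule.comap_subtype_self, top_inf_eq]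
  have hequiv := Submodule.comapSubtypeEquivOfLe (inf_le_left : G ⊓ kerAt x ≤ G)
  have hfr : finrank ℝ ↥(LinearMap.ker ((mulVecAt n x).domRestrict G))
      = finrank ℝ ↥(G ⊓ kerAt x) := by
    rw [hker]; exact hequiv.finrank_eq
  rw [hfr] at h
  omega

lemma mem_G_cases {X : Matrix (Fin (p + q)) (Fin (p + q)) ℝ}
    (hX : X ∈ kSub p q ⊔ aSub p q ⊔ nSub p q) :
    ∃ K A N, K ∈ kSet p q ∧ A ∈ aSet p q ∧ N ∈ nSet p q ∧ X = K + A + N := by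
  rcases Submodule.mem_sup.1 hX with ⟨Y, hY, N, hN, rfl⟩
  rcases Submodule.mem_sup.1 hY with ⟨K, hK, A, hA, rfl⟩
  exact ⟨K, A, N, hK, hA, hN, rfl⟩

lemma linearIndependent_of_diag {ι : Type*} [Fintype ι] [DecidableEq ι]
    {V : Type*} [AddCommGroup V] [Module ℝ V]
    (v : ι → V) (φ : ι → V →ₗ[ℝ] ℝ) (hd : ∀ i, φ i (v i) ≠ 0)
    (ho : ∀ i j, i ≠ j → φ i (v j) = 0) : LinearIndependent ℝ v := by
  rw [Fintype.linearIndependent_iff]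
  intro g hg i
  have h := congrArg (φ i) hg
  rw [map_sum, map_zero] at h
  rw [Finset.sum_eq_single i] at h
  · rw [LinearMap.map_smul] at h
    have := hd i
    simp only [smul_eq_mul] at h
    rcases mul_eq_zero.1 h with h' | h'
    · exact h'
    · exact absurd h' (hd i)
  · intro j _ hj
    rw [LinearMap.map_smul, ho i j (Ne.symm hj), smul_zero]
  · intro h'; exact absurd (Finset.mem_univ _) h'

/-- lower bound for the dimension of a submodule containing independent vectors -/
lemma finrank_ge_of_indep {ι : Type*} [Fintype ι] {V : Submodule ℝ (Fin n → ℝ)}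
    (v : ι → (Fin n → ℝ))
    (hv : ∀ i, v i ∈ V) (hind : LinearIndependent ℝ v) : Fintype.card ι ≤ finrank ℝ V := by
  have hle : Submodule.span ℝ (Set.range v) ≤ V := by
    rw [Submodule.span_le]; rintro z ⟨i, rfl⟩; exact hv i
  have := finrank_span_eq_card hind
  have hmono := Submodule.finrank_mono hle
  rw [this] at hmono
  exact hmono

end InfraF

section InfraG

variable {p q : ℕ}

lemma ent_sub {n : ℕ} (X Y : Matrix (Fin n) (Fin n) ℝ) (i j : ℕ) :
    ent (X - Y) i j = ent X i j - ent Y i j := by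
  unfold ent; split <;> simp [Matrix.sub_apply]

/-- root vector: acts on pairs (a b), a < b -/
def N1mat (p q a b : ℕ) : Matrix (Fin (p + q)) (Fin (p + q)) ℝ :=
  Emat (p+q) (p-a+1) (p+b) + Emat (p+q) (p+b) (p-a+1)
    - Emat (p+q) (p+a) (p+b) + Emat (p+q) (p+b) (p+a)

/-- root vector: acts on pairs (a b), a < b -/
def N2mat (p q a b : ℕ) : Matrix (Fin (p + q)) (Fin (p + q)) ℝ :=
  Emat (p+q) (p-b+1) (p+a) + Emat (p+q) (p+a) (p-b+1)
    + Emat (p+q) (p-b+1) (p-a+1) - Emat (p+q) (p-a+1) (p-b+1)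

/-- root vector: top row t, pair a -/
def Tmat (p q t a : ℕ) : Matrix (Fin (p + q)) (Fin (p + q)) ℝ :=
  Emat (p+q) t (p-a+1) - Emat (p+q) (p-a+1) t
    + Emat (p+q) t (p+a) + Emat (p+q) (p+a) t

/-- element of the abelian part at pair a -/
def Amat (p q a : ℕ) : Matrix (Fin (p + q)) (Fin (p + q)) ℝ :=
  Emat (p+q) (p-a+1) (p+a) + Emat (p+q) (p+a) (p-a+1)

/-- element of k₀ -/
def Kmat (p q i j : ℕ) : Matrix (Fin (p + q)) (Fin (p + q)) ℝ :=
  Emat (p+q) i j - Emat (p+q) j i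

lemma ent_N1 (hq : 1 ≤ q) (hpq : q ≤ p) {a b : ℕ} (ha : 1 ≤ a) (hab : a < b) (hb : b ≤ q)
    {i j : ℕ} (hi1 : 1 ≤ i) (hi2 : i ≤ p + q) (hj1 : 1 ≤ j) (hj2 : j ≤ p + q) :
    ent (N1mat p q a b) i j =
      (if i = p - a + 1 ∧ j = p + b then 1 else 0) + (if i = p + b ∧ j = p - a + 1 then 1 else 0)
      - (if i = p + a ∧ j = p + b then 1 else 0) + (if i = p + b ∧ j = p + a then 1 else 0) := by
  unfold N1mat
  rw [ent_add, ent_sub, ent_add, ent_Emat _ _ _ _ hi1 hi2 hj1 hj2,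
    ent_Emat _ _ _ _ hi1 hi2 hj1 hj2, ent_Emat _ _ _ _ hi1 hi2 hj1 hj2,
    ent_Emat _ _ _ _ hi1 hi2 hj1 hj2]

lemma ent_N2 (hq : 1 ≤ q) (hpq : q ≤ p) {a b : ℕ} (ha : 1 ≤ a) (hab : a < b) (hb : b ≤ q)
    {i j : ℕ} (hi1 : 1 ≤ i) (hi2 : i ≤ p + q) (hj1 : 1 ≤ j) (hj2 : j ≤ p + q) :
    ent (N2mat p q a b) i j =
      (if i = p - b + 1 ∧ j = p + a then 1 else 0) + (if i = p + a ∧ j = p - b + 1 then 1 else 0)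
      + (if i = p - b + 1 ∧ j = p - a + 1 then 1 else 0)
      - (if i = p - a + 1 ∧ j = p - b + 1 then 1 else 0) := by
  unfold N2mat
  rw [ent_sub, ent_add, ent_add, ent_Emat _ _ _ _ hi1 hi2 hj1 hj2,
    ent_Emat _ _ _ _ hi1 hi2 hj1 hj2, ent_Emat _ _ _ _ hi1 hi2 hj1 hj2,
    ent_Emat _ _ _ _ hi1 hi2 hj1 hj2]

lemma ent_T (hq : 1 ≤ q) (hpq : q ≤ p) {t a : ℕ} (ht : 1 ≤ t) (ht2 : t ≤ p - q)
    (ha : 1 ≤ a) (ha2 : a ≤ q)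
    {i j : ℕ} (hi1 : 1 ≤ i) (hi2 : i ≤ p + q) (hj1 : 1 ≤ j) (hj2 : j ≤ p + q) :
    ent (Tmat p q t a) i j =
      (if i = t ∧ j = p - a + 1 then 1 else 0) - (if i = p - a + 1 ∧ j = t then 1 else 0)
      + (if i = t ∧ j = p + a then 1 else 0) + (if i = p + a ∧ j = t then 1 else 0) := by
  unfold Tmat
  rw [ent_add, ent_add, ent_sub, ent_Emat _ _ _ _ hi1 hi2 hj1 hj2,
    ent_Emat _ _ _ _ hi1 hi2 hj1 hj2, ent_Emat _ _ _ _ hi1 hi2 hj1 hj2,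
    ent_Emat _ _ _ _ hi1 hi2 hj1 hj2]

lemma N1_mem_nSet (hq : 1 ≤ q) (hpq : q ≤ p) {a b : ℕ} (ha : 1 ≤ a) (hab : a < b)
    (hb : b ≤ q) : N1mat p q a b ∈ nSet p q := by
  have hso : N1mat p q a b ∈ soSet p q := by
    have e : N1mat p q a b = (Emat (p+q) (p-a+1) (p+b) + Emat (p+q) (p+b) (p-a+1))
        + (Emat (p+q) (p+b) (p+a) - Emat (p+q) (p+a) (p+b)) := by
      unfold N1mat; abel
    rw [e]
    exact soSet_add p q
      (soSet_symPair p q _ _ (by omega) (by omega) (by omega) (by omega))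
      (soSet_skewPair p q _ _ (by omega) (by omega) (by omega) (by omega)
        (Or.inr ⟨by omega, by omega⟩))
  refine ⟨hso, ?_, ?_, ?_, ?_, ?_⟩
  · intro i j hi1 hi2 hj1 hj2
    rw [ent_N1 hq hpq ha hab hb (by omega) (by omega) (by omega) (by omega),
      if_neg (by omega), if_neg (by omega), if_neg (by omega), if_neg (by omega)]
    ring
  · intro l hl1 hl2
    rw [ent_N1 hq hpq ha hab hb (by omega) (by omega) (by omega) (by omega),
      if_neg (by omega), if_neg (by omega), if_neg (by omega), if_neg (by omega)]
    ring
  · intro k l hk1 hk2 hl1 hl2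
    rw [ent_N1 hq hpq ha hab hb (by omega) (by omega) (by omega) (by omega),
      ent_N1 hq hpq ha hab hb (by omega) (by omega) (by omega) (by omega),
      if_neg (by omega), if_neg (by omega), if_neg (by omega), if_neg (by omega),
      if_neg (by omega), if_neg (by omega), if_neg (by omega), if_neg (by omega)]
  · intro i j hi1 hij hj2
    rw [ent_N1 hq hpq ha hab hb (by omega) (by omega) (by omega) (by omega),
      ent_N1 hq hpq ha hab hb (by omega) (by omega) (by omega) (by omega),
      if_neg (by omega), if_neg (by omega), if_neg (by omega), if_neg (by omega),
      if_neg (by omega), if_neg (by omega), if_neg (by omega), if_neg (by omega)]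
  · intro i j hi1 hij hj2
    rw [ent_N1 hq hpq ha hab hb (by omega) (by omega) (by omega) (by omega),
      ent_N1 hq hpq ha hab hb (by omega) (by omega) (by omega) (by omega),
      if_neg (show ¬(p + i = p - a + 1 ∧ p + j = p + b) by omega),
      if_neg (show ¬(p + i = p + b ∧ p + j = p - a + 1) by omega),
      if_neg (show ¬(p + i = p + b ∧ p + j = p + a) by omega),
      if_neg (show ¬(p + 1 - i = p + b ∧ p + j = p - a + 1) by omega),
      if_neg (show ¬(p + 1 - i = p + a ∧ p + j = p + b) by omega),
      if_neg (show ¬(p + 1 - i = p + b ∧ p + j = p + a) by omega)]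
    by_cases h : i = a ∧ j = b
    · rw [if_pos (by omega), if_pos (by omega)]
      try ring
    · rw [if_neg (by omega), if_neg (by omega)]
      try ring

lemma N2_mem_nSet (hq : 1 ≤ q) (hpq : q ≤ p) {a b : ℕ} (ha : 1 ≤ a) (hab : a < b)
    (hb : b ≤ q) : N2mat p q a b ∈ nSet p q := by
  have hso : N2mat p q a b ∈ soSet p q := by
    have e : N2mat p q a b = (Emat (p+q) (p-b+1) (p+a) + Emat (p+q) (p+a) (p-b+1))
        + (Emat (p+q) (p-b+1) (p-a+1) - Emat (p+q) (p-a+1) (p-b+1)) := by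
      unfold N2mat; abel
    rw [e]
    exact soSet_add p q
      (soSet_symPair p q _ _ (by omega) (by omega) (by omega) (by omega))
      (soSet_skewPair p q _ _ (by omega) (by omega) (by omega) (by omega)
        (Or.inl ⟨by omega, by omega⟩))
  refine ⟨hso, ?_, ?_, ?_, ?_, ?_⟩
  · intro i j hi1 hi2 hj1 hj2
    rw [ent_N2 hq hpq ha hab hb (by omega) (by omega) (by omega) (by omega),
      if_neg (by omega), if_neg (by omega), if_neg (by omega), if_neg (by omega)]
    ring
  · intro l hl1 hl2
    rw [ent_N2 hq hpq ha hab hb (by omega) (by omega) (by omega) (by omega),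
      if_neg (by omega), if_neg (by omega), if_neg (by omega), if_neg (by omega)]
    ring
  · intro k l hk1 hk2 hl1 hl2
    rw [ent_N2 hq hpq ha hab hb (by omega) (by omega) (by omega) (by omega),
      ent_N2 hq hpq ha hab hb (by omega) (by omega) (by omega) (by omega),
      if_neg (by omega), if_neg (by omega), if_neg (by omega), if_neg (by omega),
      if_neg (by omega), if_neg (by omega), if_neg (by omega), if_neg (by omega)]
  · intro i j hi1 hij hj2
    rw [ent_N2 hq hpq ha hab hb (by omega) (by omega) (by omega) (by omega),
      ent_N2 hq hpq ha hab hb (by omega) (by omega) (by omega) (by omega),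
      if_neg (show ¬(p + 1 - j = p - b + 1 ∧ p + 1 - i = p + a) by omega),
      if_neg (show ¬(p + 1 - j = p + a ∧ p + 1 - i = p - b + 1) by omega),
      if_neg (show ¬(p + 1 - j = p - a + 1 ∧ p + 1 - i = p - b + 1) by omega),
      if_neg (show ¬(p + 1 - j = p + a ∧ p + i = p - b + 1) by omega),
      if_neg (show ¬(p + 1 - j = p - b + 1 ∧ p + i = p - a + 1) by omega),
      if_neg (show ¬(p + 1 - j = p - a + 1 ∧ p + i = p - b + 1) by omega)]
    by_cases h : i = a ∧ j = b
    · rw [if_pos (by omega), if_pos (by omega)]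
      try ring
    · rw [if_neg (by omega), if_neg (by omega)]
      try ring
  · intro i j hi1 hij hj2
    rw [ent_N2 hq hpq ha hab hb (by omega) (by omega) (by omega) (by omega),
      ent_N2 hq hpq ha hab hb (by omega) (by omega) (by omega) (by omega),
      if_neg (by omega), if_neg (by omega), if_neg (by omega), if_neg (by omega),
      if_neg (by omega), if_neg (by omega), if_neg (by omega), if_neg (by omega)]
    ring

lemma T_mem_nSet (hq : 1 ≤ q) (hpq : q ≤ p) {t a : ℕ} (ht : 1 ≤ t) (ht2 : t ≤ p - q)
    (ha : 1 ≤ a) (ha2 : a ≤ q) : Tmat p q t a ∈ nSet p q := by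
  have hso : Tmat p q t a ∈ soSet p q := by
    have e : Tmat p q t a = (Emat (p+q) t (p+a) + Emat (p+q) (p+a) t)
        + (Emat (p+q) t (p-a+1) - Emat (p+q) (p-a+1) t) := by
      unfold Tmat; abel
    rw [e]
    exact soSet_add p q
      (soSet_symPair p q _ _ (by omega) (by omega) (by omega) (by omega))
      (soSet_skewPair p q _ _ (by omega) (by omega) (by omega) (by omega)
        (Or.inl ⟨by omega, by omega⟩))
  refine ⟨hso, ?_, ?_, ?_, ?_, ?_⟩
  · intro i j hi1 hi2 hj1 hj2
    rw [ent_T hq hpq ht ht2 ha ha2 (by omega) (by omega) (by omega) (by omega),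
      if_neg (by omega), if_neg (by omega), if_neg (by omega), if_neg (by omega)]
    ring
  · intro l hl1 hl2
    rw [ent_T hq hpq ht ht2 ha ha2 (by omega) (by omega) (by omega) (by omega),
      if_neg (by omega), if_neg (by omega), if_neg (by omega), if_neg (by omega)]
    ring
  · intro k l hk1 hk2 hl1 hl2
    rw [ent_T hq hpq ht ht2 ha ha2 (by omega) (by omega) (by omega) (by omega),
      ent_T hq hpq ht ht2 ha ha2 (by omega) (by omega) (by omega) (by omega),
      if_neg (show ¬(k = p - a + 1 ∧ p - l + 1 = t) by omega),
      if_neg (show ¬(k = t ∧ p - l + 1 = p + a) by omega),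
      if_neg (show ¬(k = p + a ∧ p - l + 1 = t) by omega),
      if_neg (show ¬(k = t ∧ p + l = p - a + 1) by omega),
      if_neg (show ¬(k = p - a + 1 ∧ p + l = t) by omega),
      if_neg (show ¬(k = p + a ∧ p + l = t) by omega)]
    by_cases h : k = t ∧ l = a
    · rw [if_pos (show k = t ∧ p - l + 1 = p - a + 1 by omega),
        if_pos (show k = t ∧ p + l = p + a by omega)]
      try ring
    · rw [if_neg (show ¬(k = t ∧ p - l + 1 = p - a + 1) by omega),
        if_neg (show ¬(k = t ∧ p + l = p + a) by omega)]
      try ring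
  · intro i j hi1 hij hj2
    rw [ent_T hq hpq ht ht2 ha ha2 (by omega) (by omega) (by omega) (by omega),
      ent_T hq hpq ht ht2 ha ha2 (by omega) (by omega) (by omega) (by omega),
      if_neg (by omega), if_neg (by omega), if_neg (by omega), if_neg (by omega),
      if_neg (by omega), if_neg (by omega), if_neg (by omega), if_neg (by omega)]
  · intro i j hi1 hij hj2
    rw [ent_T hq hpq ht ht2 ha ha2 (by omega) (by omega) (by omega) (by omega),
      ent_T hq hpq ht ht2 ha ha2 (by omega) (by omega) (by omega) (by omega),
      if_neg (by omega), if_neg (by omega), if_neg (by omega), if_neg (by omega),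
      if_neg (by omega), if_neg (by omega), if_neg (by omega), if_neg (by omega)]
    ring

lemma A_mem_aSet (hq : 1 ≤ q) (hpq : q ≤ p) {a : ℕ} (ha : 1 ≤ a) (ha2 : a ≤ q) :
    Amat p q a ∈ aSet p q := by
  constructor
  · intro l hl1 hl2
    unfold Amat
    rw [ent_add, ent_add, ent_Emat _ _ _ _ (by omega) (by omega) (by omega) (by omega),
      ent_Emat _ _ _ _ (by omega) (by omega) (by omega) (by omega),
      ent_Emat _ _ _ _ (by omega) (by omega) (by omega) (by omega),
      ent_Emat _ _ _ _ (by omega) (by omega) (by omega) (by omega)]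
    split_ifs <;> first | ring1 | (exfalso; omega)
  · intro i j hi1 hi2 hj1 hj2 hne
    unfold Amat
    rw [ent_add, ent_Emat _ _ _ _ hi1 hi2 hj1 hj2, ent_Emat _ _ _ _ hi1 hi2 hj1 hj2]
    rw [if_neg, if_neg, add_zero]
    · rintro ⟨h1, h2⟩; exact hne ⟨a, ha, ha2, Or.inr ⟨h1, h2⟩⟩
    · rintro ⟨h1, h2⟩; exact hne ⟨a, ha, ha2, Or.inl ⟨h1, h2⟩⟩

lemma K_mem_kSet (hq : 1 ≤ q) (hpq : q ≤ p) {s t : ℕ} (hs : 1 ≤ s) (hs2 : s ≤ p - q)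
    (ht : 1 ≤ t) (ht2 : t ≤ p - q) : Kmat p q s t ∈ kSet p q := by
  constructor
  · intro i j hi1 hi2 hj1 hj2
    unfold Kmat
    rw [ent_sub, ent_sub, ent_Emat _ _ _ _ (by omega) (by omega) (by omega) (by omega),
      ent_Emat _ _ _ _ (by omega) (by omega) (by omega) (by omega),
      ent_Emat _ _ _ _ (by omega) (by omega) (by omega) (by omega),
      ent_Emat _ _ _ _ (by omega) (by omega) (by omega) (by omega)]
    split_ifs <;> first | ring1 | (exfalso; omega)
  · intro i j hi1 hi2 hj1 hj2 hne
    unfold Kmat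
    rw [ent_sub, ent_Emat _ _ _ _ hi1 hi2 hj1 hj2, ent_Emat _ _ _ _ hi1 hi2 hj1 hj2]
    rw [if_neg (by rintro ⟨h1, h2⟩; omega), if_neg (by rintro ⟨h1, h2⟩; omega), sub_zero]

lemma N1_mulVec (hq : 1 ≤ q) (hpq : q ≤ p) {a b : ℕ} (ha : 1 ≤ a) (hab : a < b) (hb : b ≤ q)
    (x : Fin (p + q) → ℝ) :
    N1mat p q a b *ᵥ x = vent x (p+b) • stdE (p+q) (p-a+1) + vent x (p-a+1) • stdE (p+q) (p+b)
      - vent x (p+b) • stdE (p+q) (p+a) + vent x (p+a) • stdE (p+q) (p+b) := by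
  unfold N1mat
  rw [Matrix.add_mulVec, Matrix.sub_mulVec, Matrix.add_mulVec,
    Emat_mulVec _ _ (by omega), Emat_mulVec _ _ (by omega),
    Emat_mulVec _ _ (by omega), Emat_mulVec _ _ (by omega)]

lemma N2_mulVec (hq : 1 ≤ q) (hpq : q ≤ p) {a b : ℕ} (ha : 1 ≤ a) (hab : a < b) (hb : b ≤ q)
    (x : Fin (p + q) → ℝ) :
    N2mat p q a b *ᵥ x = vent x (p+a) • stdE (p+q) (p-b+1) + vent x (p-b+1) • stdE (p+q) (p+a)
      + vent x (p-a+1) • stdE (p+q) (p-b+1) - vent x (p-b+1) • stdE (p+q) (p-a+1) := by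
  unfold N2mat
  rw [Matrix.sub_mulVec, Matrix.add_mulVec, Matrix.add_mulVec,
    Emat_mulVec _ _ (by omega), Emat_mulVec _ _ (by omega),
    Emat_mulVec _ _ (by omega), Emat_mulVec _ _ (by omega)]

lemma T_mulVec (hq : 1 ≤ q) (hpq : q ≤ p) {t a : ℕ} (ht : 1 ≤ t) (ht2 : t ≤ p - q)
    (ha : 1 ≤ a) (ha2 : a ≤ q) (x : Fin (p + q) → ℝ) :
    Tmat p q t a *ᵥ x = vent x (p-a+1) • stdE (p+q) t - vent x t • stdE (p+q) (p-a+1)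
      + vent x (p+a) • stdE (p+q) t + vent x t • stdE (p+q) (p+a) := by
  unfold Tmat
  rw [Matrix.add_mulVec, Matrix.add_mulVec, Matrix.sub_mulVec,
    Emat_mulVec _ _ (by omega), Emat_mulVec _ _ (by omega),
    Emat_mulVec _ _ (by omega), Emat_mulVec _ _ (by omega)]

lemma A_mulVec (hq : 1 ≤ q) (hpq : q ≤ p) {a : ℕ} (ha : 1 ≤ a) (ha2 : a ≤ q)
    (x : Fin (p + q) → ℝ) :
    Amat p q a *ᵥ x = vent x (p+a) • stdE (p+q) (p-a+1) + vent x (p-a+1) • stdE (p+q) (p+a) := by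
  unfold Amat
  rw [Matrix.add_mulVec, Emat_mulVec _ _ (by omega), Emat_mulVec _ _ (by omega)]

lemma K_mulVec (hq : 1 ≤ q) (hpq : q ≤ p) {s t : ℕ} (hs : 1 ≤ s) (ht : 1 ≤ t)
    (x : Fin (p + q) → ℝ) :
    Kmat p q s t *ᵥ x = vent x t • stdE (p+q) s - vent x s • stdE (p+q) t := by
  unfold Kmat
  rw [Matrix.sub_mulVec, Emat_mulVec _ _ ht, Emat_mulVec _ _ hs]

lemma nSet_le_G {X : Matrix (Fin (p + q)) (Fin (p + q)) ℝ} (hX : X ∈ nSet p q) :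
    X ∈ kSub p q ⊔ aSub p q ⊔ nSub p q :=
  Submodule.mem_sup_right hX

lemma aSet_le_G {X : Matrix (Fin (p + q)) (Fin (p + q)) ℝ} (hX : X ∈ aSet p q) :
    X ∈ kSub p q ⊔ aSub p q ⊔ nSub p q :=
  Submodule.mem_sup_left (Submodule.mem_sup_right hX)

lemma kSet_le_G {X : Matrix (Fin (p + q)) (Fin (p + q)) ℝ} (hX : X ∈ kSet p q) :
    X ∈ kSub p q ⊔ aSub p q ⊔ nSub p q :=
  Submodule.mem_sup_left (Submodule.mem_sup_left hX)

end InfraG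

section InfraH

variable {p q : ℕ}

lemma N1_image2 (hq : 1 ≤ q) (hpq : q ≤ p) {a b : ℕ} (ha : 1 ≤ a) (hab : a < b) (hb : b ≤ q)
    (x : Fin (p + q) → ℝ) :
    N1mat p q a b *ᵥ x = vent x (p+b) • wVec p q a
      + (vent x (p-a+1) + vent x (p+a)) • stdE (p+q) (p+b) := by
  rw [N1_mulVec hq hpq ha hab hb x]
  unfold wVec
  module

lemma N1_image (hq : 1 ≤ q) (hpq : q ≤ p) {a b : ℕ} (ha : 1 ≤ a) (hab : a < b) (hb : b ≤ q)
    (x : Fin (p + q) → ℝ) (hτ : vent x (p-a+1) + vent x (p+a) = 0) :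
    N1mat p q a b *ᵥ x = vent x (p+b) • wVec p q a := by
  rw [N1_image2 hq hpq ha hab hb x, hτ, zero_smul, add_zero]

lemma N2_image2 (hq : 1 ≤ q) (hpq : q ≤ p) {a b : ℕ} (ha : 1 ≤ a) (hab : a < b) (hb : b ≤ q)
    (x : Fin (p + q) → ℝ) :
    N2mat p q a b *ᵥ x = (vent x (p-a+1) + vent x (p+a)) • stdE (p+q) (p-b+1)
      - vent x (p-b+1) • wVec p q a := by
  rw [N2_mulVec hq hpq ha hab hb x]
  unfold wVec
  module

lemma N2_image (hq : 1 ≤ q) (hpq : q ≤ p) {a b : ℕ} (ha : 1 ≤ a) (hab : a < b) (hb : b ≤ q)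
    (x : Fin (p + q) → ℝ) (hτ : vent x (p-a+1) + vent x (p+a) = 0) :
    N2mat p q a b *ᵥ x = - (vent x (p-b+1) • wVec p q a) := by
  rw [N2_image2 hq hpq ha hab hb x, hτ, zero_smul, zero_sub]

lemma T_image2 (hq : 1 ≤ q) (hpq : q ≤ p) {t a : ℕ} (ht : 1 ≤ t) (ht2 : t ≤ p - q)
    (ha : 1 ≤ a) (ha2 : a ≤ q) (x : Fin (p + q) → ℝ) :
    Tmat p q t a *ᵥ x = (vent x (p-a+1) + vent x (p+a)) • stdE (p+q) t
      - vent x t • wVec p q a := by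
  rw [T_mulVec hq hpq ht ht2 ha ha2 x]
  unfold wVec
  module

lemma A_image (hq : 1 ≤ q) (hpq : q ≤ p) {a : ℕ} (ha : 1 ≤ a) (ha2 : a ≤ q)
    (x : Fin (p + q) → ℝ) (hτ : vent x (p-a+1) + vent x (p+a) = 0) :
    Amat p q a *ᵥ x = vent x (p+a) • wVec p q a := by
  rw [A_mulVec hq hpq ha ha2 x]
  have h : vent x (p-a+1) = - vent x (p+a) := by linarith
  rw [h]
  unfold wVec
  module

lemma G_mulVec_w (hq : 1 ≤ q) (hpq : q ≤ p) {X : Matrix (Fin (p + q)) (Fin (p + q)) ℝ}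
    (hX : X ∈ kSub p q ⊔ aSub p q ⊔ nSub p q) {c : ℕ} (hc1 : 1 ≤ c) (hc2 : c ≤ q) :
    X *ᵥ wVec p q c ∈ Fsub p q c := by
  obtain ⟨K, A, N, hK, hA, hN, rfl⟩ := mem_G_cases hX
  rw [Matrix.add_mulVec, Matrix.add_mulVec, flag_k hq hpq hK hc1 hc2, zero_add]
  exact (Fsub p q c).add_mem (flag_a hq hpq hA hc1 hc2) (flag_n hq hpq hN hc1 hc2)

lemma G_mulVec_mem_Fsub (hq : 1 ≤ q) (hpq : q ≤ p)
    {X : Matrix (Fin (p + q)) (Fin (p + q)) ℝ}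
    (hX : X ∈ kSub p q ⊔ aSub p q ⊔ nSub p q) {a : ℕ} (ha2 : a ≤ q)
    {x : Fin (p + q) → ℝ} (hx : x ∈ Fsub p q a) : X *ᵥ x ∈ Fsub p q a := by
  rw [Fsub_eq_comb hq hpq ha2 hx]
  have e : X *ᵥ (∑ c ∈ Finset.Icc 1 a, vent x (p - c + 1) • wVec p q c)
      = ∑ c ∈ Finset.Icc 1 a, vent x (p - c + 1) • (X *ᵥ wVec p q c) := by
    show X.mulVecLin _ = _
    rw [map_sum]
    refine Finset.sum_congr rfl fun c _ => ?_
    rw [LinearMap.map_smul]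
    rfl
  rw [e]
  refine Submodule.sum_mem _ fun c hc => Submodule.smul_mem _ _ ?_
  simp only [Finset.mem_Icc] at hc
  exact Fsub_mono hc.2 (G_mulVec_w hq hpq hX hc.1 (by omega))

/-- Case (c): the dimension of the image. -/
lemma case_c (hq : 1 ≤ q) (hpq : q ≤ p) (x : Fin (p + q) → ℝ)
    (hj : ∀ j, 1 ≤ j → j ≤ p - q → vent x j = 0)
    (hi : ∀ i, 1 ≤ i → i ≤ q → vent x (p - i + 1) + vent x (p + i) = 0)
    {l : ℕ} (hl1 : 1 ≤ l) (hl2 : l ≤ q) (hxl : vent x (p + l) ≠ 0)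
    (htail : ∀ j, l < j → j ≤ q → vent x (p + j) = 0) :
    Module.finrank ℝ
      ↥((kSub p q ⊔ aSub p q ⊔ nSub p q).map (mulVecAt (p + q) x)) = l := by
  set G := kSub p q ⊔ aSub p q ⊔ nSub p q with hG
  set V := G.map (mulVecAt (p + q) x) with hV
  have hxF : x ∈ Fsub p q l := ⟨hj, hi, htail⟩
  -- upper bound
  have hup : V ≤ Fsub p q l := by
    rintro _ ⟨X, hX, rfl⟩
    exact G_mulVec_mem_Fsub hq hpq hX hl2 hxF
  have hspan : Fsub p q l ≤ Submodule.span ℝ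
      (Set.range (fun t : Fin l => wVec p q ((t : ℕ) + 1))) := by
    refine le_trans (Fsub_le_span hq hpq hl2) (Submodule.span_mono ?_)
    rintro z ⟨c, ⟨h1, h2⟩, rfl⟩
    refine ⟨⟨c - 1, by omega⟩, ?_⟩
    show wVec p q ((c - 1) + 1) = wVec p q c
    rw [Nat.sub_add_cancel h1]
  have hle : Module.finrank ℝ V ≤ l := by
    have h1 := Submodule.finrank_mono (le_trans hup hspan)
    have h2 := finrank_range_le_card (R := ℝ) (fun t : Fin l => wVec p q ((t : ℕ) + 1))
    rw [Set.finrank] at h2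
    rw [Fintype.card_fin] at h2
    exact le_trans h1 h2
  -- lower bound
  have hmem : ∀ t : Fin l, vent x (p + l) • wVec p q ((t : ℕ) + 1) ∈ V := by
    intro t
    have ht1 : (1 : ℕ) ≤ (t : ℕ) + 1 := by omega
    have htq : (t : ℕ) + 1 ≤ q := by have := t.isLt; omega
    by_cases hlt : (t : ℕ) + 1 < l
    · refine ⟨N1mat p q ((t : ℕ) + 1) l, nSet_le_G (N1_mem_nSet hq hpq ht1 hlt hl2), ?_⟩
      rw [mulVecAt_apply, N1_image hq hpq ht1 hlt hl2 x (hi _ ht1 htq)]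
    · have he : (t : ℕ) + 1 = l := by have := t.isLt; omega
      refine ⟨Amat p q ((t : ℕ) + 1), aSet_le_G (A_mem_aSet hq hpq ht1 htq), ?_⟩
      rw [mulVecAt_apply, A_image hq hpq ht1 htq x (hi _ ht1 htq), he]
  have hind : LinearIndependent ℝ
      (fun t : Fin l => vent x (p + l) • wVec p q ((t : ℕ) + 1)) := by
    apply linearIndependent_of_diag (fun t : Fin l => vent x (p + l) • wVec p q ((t : ℕ) + 1))
      (fun t => ventL (p + q) (p + (t : ℕ) + 1))
    · intro t
      have htq : (t : ℕ) + 1 ≤ q := by have := t.isLt; omega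
      show vent (vent x (p + l) • wVec p q ((t : ℕ) + 1)) (p + (t : ℕ) + 1) ≠ 0
      rw [vent_smul]
      unfold wVec
      rw [vent_sub, vent_stdE (by omega) (by omega), vent_stdE (by omega) (by omega),
        if_neg (by omega), if_pos (by omega)]
      simpa using hxl
    · intro t s hts
      have htq : (t : ℕ) + 1 ≤ q := by have := t.isLt; omega
      have hsq : (s : ℕ) + 1 ≤ q := by have := s.isLt; omega
      show vent (vent x (p + l) • wVec p q ((s : ℕ) + 1)) (p + (t : ℕ) + 1) = 0
      rw [vent_smul]
      unfold wVec
      rw [vent_sub, vent_stdE (by omega) (by omega), vent_stdE (by omega) (by omega),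
        if_neg (by omega), if_neg (by
          intro h
          exact hts (by ext; omega))]
      ring
  have hge := finrank_ge_of_indep (fun t : Fin l => vent x (p + l) • wVec p q ((t : ℕ) + 1)) hmem hind
  rw [Fintype.card_fin] at hge
  omega

end InfraH

section InfraI

open Module

variable {p q : ℕ}

lemma G_subset_soSet (hq : 1 ≤ q) (hpq : q ≤ p) {X : Matrix (Fin (p + q)) (Fin (p + q)) ℝ}
    (hX : X ∈ kSub p q ⊔ aSub p q ⊔ nSub p q) : X ∈ soSet p q := by
  obtain ⟨K, A, N, hK, hA, hN, rfl⟩ := mem_G_cases hX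
  exact soSet_add p q (soSet_add p q (kSet_subset_soSet hpq hK) (aSet_subset_soSet hpq hA)) hN.1

lemma upper_w (hq : 1 ≤ q) (hpq : q ≤ p) {x : Fin (p + q) → ℝ}
    {X : Matrix (Fin (p + q)) (Fin (p + q)) ℝ} (hX : X ∈ kSub p q ⊔ aSub p q ⊔ nSub p q)
    {b : ℕ} (hb1 : 1 ≤ b) (hb2 : b ≤ q)
    (hτ : ∀ c, 1 ≤ c → c ≤ b → vent x (p - c + 1) + vent x (p + c) = 0) :
    ip p q (X *ᵥ x) (wVec p q b) = 0 := by
  rw [soSet_ip (G_subset_soSet hq hpq hX) x (wVec p q b),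
    ip_eq_zero_of_mem_Fsub hq hpq hb2 hτ (G_mulVec_w hq hpq hX hb1 hb2), neg_zero]

/-- The functional package cutting out the orbit-image space. -/
noncomputable def PsiMap (p q m : ℕ) (x : Fin (p + q) → ℝ) :
    (Fin (p + q) → ℝ) →ₗ[ℝ] (Fin m → ℝ) :=
  LinearMap.pi (fun t : Fin m =>
    if (t : ℕ) = 0 then ipR p q x else ipR p q (wVec p q (t : ℕ)))

lemma PsiMap_apply_zero {m : ℕ} (x y : Fin (p + q) → ℝ) (t : Fin m) (ht : (t : ℕ) = 0) :
    PsiMap p q m x y t = ip p q y x := by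
  unfold PsiMap
  rw [LinearMap.pi_apply, if_pos ht, ipR_apply]

lemma PsiMap_apply_ne {m : ℕ} (x y : Fin (p + q) → ℝ) (t : Fin m) (ht : (t : ℕ) ≠ 0) :
    PsiMap p q m x y t = ip p q y (wVec p q (t : ℕ)) := by
  unfold PsiMap
  rw [LinearMap.pi_apply, if_neg ht, ipR_apply]

lemma ip_smul_left (c : ℝ) (y z : Fin (p + q) → ℝ) :
    ip p q (c • y) z = c * ip p q y z := by
  rw [ip_comm, ip_smul_right, ip_comm]

lemma ip_add_left (y z w : Fin (p + q) → ℝ) :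
    ip p q (y + z) w = ip p q y w + ip p q z w := by
  rw [ip_comm, ip_add_right, ip_comm w, ip_comm w]

lemma ip_sum_left {ι : Type*} (s : Finset ι) (f : ι → (Fin (p + q) → ℝ))
    (w : Fin (p + q) → ℝ) :
    ip p q (∑ i ∈ s, f i) w = ∑ i ∈ s, ip p q (f i) w := by
  rw [ip_comm, show ∀ u, ip p q w u = ipL p q w u from fun u => rfl, map_sum]
  exact Finset.sum_congr rfl fun i _ => by rw [ipL_apply, ip_comm]

lemma ip_vVec_wVec (hq : 1 ≤ q) (hpq : q ≤ p) {b c : ℕ} (hb1 : 1 ≤ b) (hb2 : b ≤ q)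
    (hc1 : 1 ≤ c) (hc2 : c ≤ q) :
    ip p q (vVec p q b) (wVec p q c) = if b = c then 2 else 0 := by
  rw [ip_wVec _ c hc1 hc2 hpq]
  unfold vVec
  rw [vent_add, vent_add, vent_stdE (by omega) (by omega), vent_stdE (by omega) (by omega),
    vent_stdE (by omega) (by omega), vent_stdE (by omega) (by omega)]
  by_cases h : b = c
  · rw [if_pos (by omega), if_neg (by omega), if_neg (by omega), if_pos (by omega),
      if_pos h]
    norm_num
  · rw [if_neg (by omega), if_neg (by omega), if_neg (by omega), if_neg (by omega),
      if_neg h]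
    norm_num

lemma ip_wVec_wVec (hq : 1 ≤ q) (hpq : q ≤ p) {b c : ℕ} (hb1 : 1 ≤ b) (hb2 : b ≤ q)
    (hc1 : 1 ≤ c) (hc2 : c ≤ q) :
    ip p q (wVec p q b) (wVec p q c) = 0 := by
  rw [ip_wVec _ c hc1 hc2 hpq]
  unfold wVec
  rw [vent_sub, vent_sub, vent_stdE (by omega) (by omega), vent_stdE (by omega) (by omega),
    vent_stdE (by omega) (by omega), vent_stdE (by omega) (by omega)]
  by_cases h : b = c
  · rw [if_pos (by omega), if_neg (by omega), if_neg (by omega), if_pos (by omega)]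
    norm_num
  · rw [if_neg (by omega), if_neg (by omega), if_neg (by omega), if_neg (by omega)]
    norm_num

lemma psi_surj (hq : 1 ≤ q) (hpq : q ≤ p) (x : Fin (p + q) → ℝ) {m : ℕ} (hm : 1 ≤ m)
    (hmq : m - 1 ≤ q) (y₀ : Fin (p + q) → ℝ) (hy₀x : ip p q y₀ x ≠ 0)
    (hy₀w : ∀ b, 1 ≤ b → b ≤ m - 1 → ip p q y₀ (wVec p q b) = 0) :
    Function.Surjective (PsiMap p q m x) := by
  intro z
  set z' : ℕ → ℝ := fun b => if h : b < m then z ⟨b, h⟩ else 0 with hz'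
  set c₀ : ℝ := (z' 0 - ∑ b ∈ Finset.Icc 1 (m - 1), (z' b / 2) * ip p q (vVec p q b) x)
      / ip p q y₀ x with hc₀
  have hz'eq : ∀ (b : ℕ) (hb : b < m), z' b = z ⟨b, hb⟩ := fun b hb => by
    rw [hz']; exact dif_pos hb
  refine ⟨c₀ • y₀ + ∑ b ∈ Finset.Icc 1 (m - 1), (z' b / 2) • vVec p q b, ?_⟩
  funext t
  by_cases ht : (t : ℕ) = 0
  · rw [PsiMap_apply_zero _ _ t ht]
    have expand : ip p q (c₀ • y₀ + ∑ b ∈ Finset.Icc 1 (m - 1), (z' b / 2) • vVec p q b) x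
        = c₀ * ip p q y₀ x
          + ∑ b ∈ Finset.Icc 1 (m - 1), (z' b / 2) * ip p q (vVec p q b) x := by
      rw [ip_add_left, ip_smul_left, ip_sum_left]
      congr 1
      exact Finset.sum_congr rfl fun b _ => ip_smul_left _ _ _
    rw [expand, hc₀, div_mul_cancel₀ _ hy₀x]
    have : z t = z' 0 := by
      rw [hz'eq 0 (by omega)]
      congr 1
      ext
      simp [ht]
    rw [this]
    ring
  · rw [PsiMap_apply_ne _ _ t ht]
    have htq : (t : ℕ) ≤ m - 1 := by have := t.isLt; omega
    have expand : ip p q (c₀ • y₀ + ∑ b ∈ Finset.Icc 1 (m - 1), (z' b / 2) • vVec p q b)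
        (wVec p q (t : ℕ))
        = c₀ * ip p q y₀ (wVec p q (t : ℕ))
          + ∑ b ∈ Finset.Icc 1 (m - 1), (z' b / 2) * ip p q (vVec p q b) (wVec p q (t : ℕ)) := by
      rw [ip_add_left, ip_smul_left, ip_sum_left]
      congr 1
      exact Finset.sum_congr rfl fun b _ => ip_smul_left _ _ _
    rw [expand, hy₀w (t : ℕ) (by omega) htq, mul_zero, zero_add,
      Finset.sum_eq_single (t : ℕ)]
    · rw [ip_vVec_wVec hq hpq (by omega) (by omega) (by omega) (by omega), if_pos rfl]
      have : z t = z' (t : ℕ) := by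
        rw [hz'eq (t : ℕ) t.isLt]
      rw [this]
      ring
    · intro b hb hne
      simp only [Finset.mem_Icc] at hb
      rw [ip_vVec_wVec hq hpq (by omega) (by omega) (by omega) (by omega), if_neg hne,
        mul_zero]
    · intro hnotmem
      exact absurd (Finset.mem_Icc.2 ⟨by omega, htq⟩) hnotmem

lemma psi_ker_dim (hq : 1 ≤ q) (hpq : q ≤ p) (x : Fin (p + q) → ℝ) {m : ℕ}
    (hsurj : Function.Surjective (PsiMap p q m x)) :
    finrank ℝ ↥(LinearMap.ker (PsiMap p q m x)) = p + q - m := by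
  have h := LinearMap.finrank_range_add_finrank_ker (PsiMap p q m x)
  rw [LinearMap.range_eq_top.2 hsurj, finrank_top] at h
  rw [Module.finrank_pi, Module.finrank_pi, Fintype.card_fin, Fintype.card_fin] at h
  omega

lemma upper_bound_psi (hq : 1 ≤ q) (hpq : q ≤ p) (x : Fin (p + q) → ℝ) {m : ℕ}
    (hmq : m - 1 ≤ q)
    (hτ : ∀ c, 1 ≤ c → c ≤ m - 1 → vent x (p - c + 1) + vent x (p + c) = 0) :
    (kSub p q ⊔ aSub p q ⊔ nSub p q).map (mulVecAt (p + q) x)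
      ≤ LinearMap.ker (PsiMap p q m x) := by
  rintro _ ⟨X, hX, rfl⟩
  simp only [SetLike.mem_coe, LinearMap.mem_ker, mulVecAt_apply]
  funext t
  by_cases ht : (t : ℕ) = 0
  · rw [PsiMap_apply_zero _ _ t ht]
    exact (ip_self_eq_zero (G_subset_soSet hq hpq hX) x).trans rfl
  · rw [PsiMap_apply_ne _ _ t ht]
    have htq : (t : ℕ) ≤ m - 1 := by have := t.isLt; omega
    exact (upper_w hq hpq hX (by omega) (by omega)
      (fun c hc1 hc2 => hτ c hc1 (by omega))).trans rfl

end InfraI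

section InfraJ

open Module

variable {p q : ℕ}

lemma ip_stdE_wVec (hq : 1 ≤ q) (hpq : q ≤ p) {j b : ℕ} (hj1 : 1 ≤ j) (hj2 : j ≤ p - q)
    (hb1 : 1 ≤ b) (hb2 : b ≤ q) :
    ip p q (stdE (p + q) j) (wVec p q b) = 0 := by
  rw [ip_wVec _ b hb1 hb2 hpq, vent_stdE (by omega) (by omega), vent_stdE (by omega) (by omega),
    if_neg (by omega), if_neg (by omega), add_zero]

/-- Case (b): the dimension of the image. -/
lemma case_b (hq : 1 ≤ q) (hpq : q < p) (x : Fin (p + q) → ℝ)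
    (hi : ∀ i, 1 ≤ i → i ≤ q → vent x (p - i + 1) + vent x (p + i) = 0)
    {j₀ : ℕ} (hj1 : 1 ≤ j₀) (hj2 : j₀ ≤ p - q) (hx0 : vent x j₀ ≠ 0) :
    Module.finrank ℝ
      ↥((kSub p q ⊔ aSub p q ⊔ nSub p q).map (mulVecAt (p + q) x)) = p - 1 := by
  have hpq' : q ≤ p := le_of_lt hpq
  set V := (kSub p q ⊔ aSub p q ⊔ nSub p q).map (mulVecAt (p + q) x) with hV
  -- upper bound
  have hip0 : ip p q (stdE (p + q) j₀) x ≠ 0 := by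
    rw [ip_comm, ip_stdE x j₀ (by omega) (by omega), if_pos (by omega), one_mul]
    exact hx0
  have hsurj := psi_surj hq hpq' x (m := q + 1) (by omega) (by omega) (stdE (p + q) j₀)
    hip0 (fun b hb1 hb2 => ip_stdE_wVec hq hpq' hj1 hj2 hb1 (by omega))
  have hker := psi_ker_dim hq hpq' x hsurj
  have hupper : finrank ℝ V ≤ p - 1 := by
    have h1 := Submodule.finrank_mono
      (upper_bound_psi hq hpq' x (m := q + 1) (by omega)
        (fun c hc1 hc2 => hi c hc1 (by omega)))
    rw [hker] at h1
    have : p + q - (q + 1) = p - 1 := by omega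
    rwa [this] at h1
  -- lower bound
  set jf : ℕ → ℕ := fun s => if s + 1 < j₀ then s + 1 else s + 2 with hjf
  have hjfb : ∀ s, s < p - q - 1 → 1 ≤ jf s ∧ jf s ≤ p - q ∧ jf s ≠ j₀ := by
    intro s hs
    rw [hjf]
    dsimp only
    split_ifs <;> omega
  have hjfinj : ∀ s s', s ≠ s' → jf s ≠ jf s' := by
    intro s s' hne
    rw [hjf]
    dsimp only
    split_ifs <;> omega
  set v : (Fin (p - q - 1) ⊕ Fin q) → (Fin (p + q) → ℝ) := fun t =>
    Sum.elim
      (fun s : Fin (p - q - 1) =>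
        vent x j₀ • stdE (p + q) (jf (s : ℕ)) - vent x (jf (s : ℕ)) • stdE (p + q) j₀)
      (fun b : Fin q => (- vent x j₀) • wVec p q ((b : ℕ) + 1)) t with hv
  have hmem : ∀ t, v t ∈ V := by
    rintro (s | b)
    · obtain ⟨h1, h2, h3⟩ := hjfb (s : ℕ) s.isLt
      refine ⟨Kmat p q (jf (s : ℕ)) j₀, kSet_le_G (K_mem_kSet hq hpq' h1 h2 hj1 hj2), ?_⟩
      rw [mulVecAt_apply, K_mulVec hq hpq' h1 hj1 x]
      rfl
    · have hb1 : (1 : ℕ) ≤ (b : ℕ) + 1 := by omega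
      have hbq : (b : ℕ) + 1 ≤ q := by have := b.isLt; omega
      refine ⟨Tmat p q j₀ ((b : ℕ) + 1), nSet_le_G (T_mem_nSet hq hpq' hj1 hj2 hb1 hbq), ?_⟩
      rw [mulVecAt_apply, T_image2 hq hpq' hj1 hj2 hb1 hbq x, hi _ hb1 hbq, zero_smul,
        zero_sub, ← neg_smul]
      rfl
  have hind : LinearIndependent ℝ v := by
    apply linearIndependent_of_diag v
      (Sum.elim (fun s : Fin (p - q - 1) => ventL (p + q) (jf (s : ℕ)))
        (fun b : Fin q => ventL (p + q) (p + (b : ℕ) + 1)))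
    · rintro (s | b)
      · obtain ⟨h1, h2, h3⟩ := hjfb (s : ℕ) s.isLt
        show vent (vent x j₀ • stdE (p + q) (jf (s : ℕ))
          - vent x (jf (s : ℕ)) • stdE (p + q) j₀) (jf (s : ℕ)) ≠ 0
        rw [vent_sub, vent_smul, vent_smul, vent_stdE (by omega) (by omega),
          vent_stdE (by omega) (by omega), if_pos rfl, if_neg (by omega)]
        simpa using hx0
      · have hbq : (b : ℕ) + 1 ≤ q := by have := b.isLt; omega
        show vent ((- vent x j₀) • wVec p q ((b : ℕ) + 1)) (p + (b : ℕ) + 1) ≠ 0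
        rw [vent_smul]
        unfold wVec
        rw [vent_sub, vent_stdE (by omega) (by omega), vent_stdE (by omega) (by omega),
          if_neg (by omega), if_pos (by omega)]
        simpa using hx0
    · rintro (s | b) (s' | b') hne
      · obtain ⟨h1, h2, h3⟩ := hjfb (s : ℕ) s.isLt
        obtain ⟨h1', h2', h3'⟩ := hjfb (s' : ℕ) s'.isLt
        have hss : (s : ℕ) ≠ (s' : ℕ) := fun h => hne (by rw [Sum.inl.injEq]; ext; exact h)
        show vent (vent x j₀ • stdE (p + q) (jf (s' : ℕ))
          - vent x (jf (s' : ℕ)) • stdE (p + q) j₀) (jf (s : ℕ)) = 0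
        rw [vent_sub, vent_smul, vent_smul, vent_stdE (by omega) (by omega),
          vent_stdE (by omega) (by omega), if_neg (hjfinj _ _ hss),
          if_neg (by omega)]
        ring
      · obtain ⟨h1, h2, h3⟩ := hjfb (s : ℕ) s.isLt
        have hbq : (b' : ℕ) + 1 ≤ q := by have := b'.isLt; omega
        show vent ((- vent x j₀) • wVec p q ((b' : ℕ) + 1)) (jf (s : ℕ)) = 0
        rw [vent_smul]
        unfold wVec
        rw [vent_sub, vent_stdE (by omega) (by omega), vent_stdE (by omega) (by omega),
          if_neg (by omega), if_neg (by omega)]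
        ring
      · obtain ⟨h1', h2', h3'⟩ := hjfb (s' : ℕ) s'.isLt
        have hbq : (b : ℕ) + 1 ≤ q := by have := b.isLt; omega
        show vent (vent x j₀ • stdE (p + q) (jf (s' : ℕ))
          - vent x (jf (s' : ℕ)) • stdE (p + q) j₀) (p + (b : ℕ) + 1) = 0
        rw [vent_sub, vent_smul, vent_smul, vent_stdE (by omega) (by omega),
          vent_stdE (by omega) (by omega), if_neg (by omega), if_neg (by omega)]
        ring
      · have hbq : (b : ℕ) + 1 ≤ q := by have := b.isLt; omega
        have hbq' : (b' : ℕ) + 1 ≤ q := by have := b'.isLt; omega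
        have hbb : (b : ℕ) ≠ (b' : ℕ) := fun h => hne (by rw [Sum.inr.injEq]; ext; exact h)
        show vent ((- vent x j₀) • wVec p q ((b' : ℕ) + 1)) (p + (b : ℕ) + 1) = 0
        rw [vent_smul]
        unfold wVec
        rw [vent_sub, vent_stdE (by omega) (by omega), vent_stdE (by omega) (by omega),
          if_neg (by omega), if_neg (by omega)]
        ring
  have hge := finrank_ge_of_indep v hmem hind
  rw [Fintype.card_sum, Fintype.card_fin, Fintype.card_fin] at hge
  omega

end InfraJ

section InfraK

open Module

variable {p q : ℕ}

lemma ip_stdE_wVec_gen (hq : 1 ≤ q) (hpq : q ≤ p) {j k : ℕ} (hj1 : 1 ≤ j) (hj2 : j ≤ p + q)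
    (hk1 : 1 ≤ k) (hk2 : k ≤ q) (h1 : j ≠ p - k + 1) (h2 : j ≠ p + k) :
    ip p q (stdE (p + q) j) (wVec p q k) = 0 := by
  rw [ip_wVec _ k hk1 hk2 hpq, vent_stdE (by omega) (by omega), vent_stdE (by omega) (by omega),
    if_neg (by omega), if_neg (by omega), add_zero]

/-- Case (a): the dimension of the image. -/
lemma case_a (hq : 1 ≤ q) (hpq : q ≤ p) (x : Fin (p + q) → ℝ)
    {k : ℕ} (hk1 : 1 ≤ k) (hk2 : k ≤ q)
    (hτk : vent x (p - k + 1) + vent x (p + k) ≠ 0)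
    (hτ : ∀ i, 1 ≤ i → i < k → vent x (p - i + 1) + vent x (p + i) = 0) :
    Module.finrank ℝ
      ↥((kSub p q ⊔ aSub p q ⊔ nSub p q).map (mulVecAt (p + q) x)) = p + q - k := by
  set V := (kSub p q ⊔ aSub p q ⊔ nSub p q).map (mulVecAt (p + q) x) with hV
  -- upper bound
  have hip0 : ip p q (wVec p q k) x ≠ 0 := by
    rw [ip_comm, ip_wVec x k hk1 hk2 hpq]
    exact hτk
  have hsurj := psi_surj hq hpq x (m := k) (by omega) (by omega) (wVec p q k)
    hip0 (fun b hb1 hb2 => ip_wVec_wVec hq hpq hk1 hk2 hb1 (by omega))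
  have hker := psi_ker_dim hq hpq x hsurj
  have hupper : finrank ℝ V ≤ p + q - k := by
    have h1 := Submodule.finrank_mono
      (upper_bound_psi hq hpq x (m := k) (by omega)
        (fun c hc1 hc2 => hτ c hc1 (by omega)))
    rwa [hker] at h1
  -- lower bound
  set τk : ℝ := vent x (p - k + 1) + vent x (p + k) with hτkdef
  set v : (Fin (p - q) ⊕ (Fin (k - 1) ⊕ (Fin (q - k) ⊕ (Fin (q - k) ⊕ Fin 1))))
      → (Fin (p + q) → ℝ) := fun t =>
    Sum.elim
      (fun s : Fin (p - q) =>
        τk • stdE (p + q) ((s : ℕ) + 1) - vent x ((s : ℕ) + 1) • wVec p q k)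
      (Sum.elim
        (fun a : Fin (k - 1) => τk • wVec p q ((a : ℕ) + 1))
        (Sum.elim
          (fun b : Fin (q - k) =>
            τk • stdE (p + q) (p - (k + 1 + (b : ℕ)) + 1)
              - vent x (p - (k + 1 + (b : ℕ)) + 1) • wVec p q k)
          (Sum.elim
            (fun r : Fin (q - k) =>
              vent x (p + (k + 1 + (r : ℕ))) • wVec p q k
                + τk • stdE (p + q) (p + (k + 1 + (r : ℕ))))
            (fun _ : Fin 1 =>
              vent x (p + k) • stdE (p + q) (p - k + 1)
                + vent x (p - k + 1) • stdE (p + q) (p + k))))) t with hvdef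
  have hv0 : ∀ (c : ℝ) (j i : ℕ), 1 ≤ i → i ≤ p + q → i ≠ j →
      vent (c • stdE (p + q) j) i = 0 := by
    intro c j i h1 h2 hne
    rw [vent_smul, vent_stdE h1 h2, if_neg hne, mul_zero]
  have hv1 : ∀ (c : ℝ) (i : ℕ), 1 ≤ i → i ≤ p + q →
      vent (c • stdE (p + q) i) i = c := by
    intro c i h1 h2
    rw [vent_smul, vent_stdE h1 h2, if_pos rfl, mul_one]
  have hw0 : ∀ (c : ℝ) (ck i : ℕ), 1 ≤ ck → ck ≤ q → 1 ≤ i → i ≤ p + q →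
      i ≠ p - ck + 1 → i ≠ p + ck → vent (c • wVec p q ck) i = 0 := by
    intro c ck i hck1 hck2 h1 h2 hne1 hne2
    rw [vent_smul]
    unfold wVec
    rw [vent_sub, vent_stdE h1 h2, vent_stdE h1 h2, if_neg hne1, if_neg hne2]
    ring
  have hmem : ∀ t, v t ∈ V := by
    rintro (s | a | b | r | z)
    · have hs1 : 1 ≤ (s : ℕ) + 1 := by omega
      have hs2 : (s : ℕ) + 1 ≤ p - q := by have := s.isLt; omega
      refine ⟨Tmat p q ((s : ℕ) + 1) k, nSet_le_G (T_mem_nSet hq hpq hs1 hs2 hk1 hk2), ?_⟩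
      rw [mulVecAt_apply, T_image2 hq hpq hs1 hs2 hk1 hk2 x]
      rfl
    · have ha1 : 1 ≤ (a : ℕ) + 1 := by omega
      have hak : (a : ℕ) + 1 < k := by have := a.isLt; omega
      have hτa := hτ ((a : ℕ) + 1) ha1 hak
      have hmem1 : vent x (p + k) • wVec p q ((a : ℕ) + 1) ∈ V :=
        ⟨N1mat p q ((a : ℕ) + 1) k, nSet_le_G (N1_mem_nSet hq hpq ha1 hak hk2),
          by rw [mulVecAt_apply, N1_image hq hpq ha1 hak hk2 x hτa]⟩
      have hmem2 : -(vent x (p - k + 1) • wVec p q ((a : ℕ) + 1)) ∈ V :=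
        ⟨N2mat p q ((a : ℕ) + 1) k, nSet_le_G (N2_mem_nSet hq hpq ha1 hak hk2),
          by rw [mulVecAt_apply, N2_image hq hpq ha1 hak hk2 x hτa]⟩
      have hsum := V.sub_mem hmem1 hmem2
      have e : τk • wVec p q ((a : ℕ) + 1)
          = vent x (p + k) • wVec p q ((a : ℕ) + 1)
            - -(vent x (p - k + 1) • wVec p q ((a : ℕ) + 1)) := by
        rw [hτkdef]; module
      show τk • wVec p q ((a : ℕ) + 1) ∈ V
      rw [e]; exact hsum
    · have hb2 : k + 1 + (b : ℕ) ≤ q := by have := b.isLt; omega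
      refine ⟨N2mat p q k (k + 1 + (b : ℕ)),
        nSet_le_G (N2_mem_nSet hq hpq hk1 (by omega) hb2), ?_⟩
      rw [mulVecAt_apply, N2_image2 hq hpq hk1 (by omega) hb2 x]
      rfl
    · have hr2 : k + 1 + (r : ℕ) ≤ q := by have := r.isLt; omega
      refine ⟨N1mat p q k (k + 1 + (r : ℕ)),
        nSet_le_G (N1_mem_nSet hq hpq hk1 (by omega) hr2), ?_⟩
      rw [mulVecAt_apply, N1_image2 hq hpq hk1 (by omega) hr2 x]
      rfl
    · refine ⟨Amat p q k, aSet_le_G (A_mem_aSet hq hpq hk1 hk2), ?_⟩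
      rw [mulVecAt_apply, A_mulVec hq hpq hk1 hk2 x]
      rfl
  have hind : LinearIndependent ℝ v := by
    apply linearIndependent_of_diag v
      (Sum.elim
        (fun s : Fin (p - q) => ventL (p + q) ((s : ℕ) + 1))
        (Sum.elim
          (fun a : Fin (k - 1) => ventL (p + q) (p + ((a : ℕ) + 1)))
          (Sum.elim
            (fun b : Fin (q - k) => ventL (p + q) (p - (k + 1 + (b : ℕ)) + 1))
            (Sum.elim
              (fun r : Fin (q - k) => ventL (p + q) (p + (k + 1 + (r : ℕ))))
              (fun _ : Fin 1 => ipR p q (wVec p q k))))))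
    · rintro (s | a | b | r | z)
      · have hs2 : (s : ℕ) + 1 ≤ p - q := by have := s.isLt; omega
        show vent (τk • stdE (p + q) ((s : ℕ) + 1)
          - vent x ((s : ℕ) + 1) • wVec p q k) ((s : ℕ) + 1) ≠ 0
        rw [vent_sub, hv1 _ _ (by omega) (by omega),
          hw0 _ k _ hk1 hk2 (by omega) (by omega) (by omega) (by omega), sub_zero]
        exact hτk
      · have hak : (a : ℕ) + 1 < k := by have := a.isLt; omega
        show vent (τk • wVec p q ((a : ℕ) + 1)) (p + ((a : ℕ) + 1)) ≠ 0
        rw [vent_smul]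
        unfold wVec
        rw [vent_sub, vent_stdE (by omega) (by omega), vent_stdE (by omega) (by omega),
          if_neg (by omega), if_pos rfl]
        simpa using hτk
      · have hb2 : k + 1 + (b : ℕ) ≤ q := by have := b.isLt; omega
        show vent (τk • stdE (p + q) (p - (k + 1 + (b : ℕ)) + 1)
          - vent x (p - (k + 1 + (b : ℕ)) + 1) • wVec p q k) (p - (k + 1 + (b : ℕ)) + 1) ≠ 0
        rw [vent_sub, hv1 _ _ (by omega) (by omega),
          hw0 _ k _ hk1 hk2 (by omega) (by omega) (by omega) (by omega), sub_zero]
        exact hτk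
      · have hr2 : k + 1 + (r : ℕ) ≤ q := by have := r.isLt; omega
        show vent (vent x (p + (k + 1 + (r : ℕ))) • wVec p q k
          + τk • stdE (p + q) (p + (k + 1 + (r : ℕ)))) (p + (k + 1 + (r : ℕ))) ≠ 0
        rw [vent_add, hv1 _ _ (by omega) (by omega),
          hw0 _ k _ hk1 hk2 (by omega) (by omega) (by omega) (by omega), zero_add]
        exact hτk
      · show ip p q (vent x (p + k) • stdE (p + q) (p - k + 1)
          + vent x (p - k + 1) • stdE (p + q) (p + k)) (wVec p q k) ≠ 0
        rw [ip_add_left, ip_smul_left, ip_smul_left,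
          ip_wVec _ k hk1 hk2 hpq, ip_wVec _ k hk1 hk2 hpq,
          vent_stdE (by omega) (by omega), vent_stdE (by omega) (by omega),
          vent_stdE (by omega) (by omega), vent_stdE (by omega) (by omega),
          if_pos rfl, if_neg (by omega), if_neg (by omega), if_pos rfl]
        intro hcon
        apply hτk
        linarith
    · rintro (s | a | b | r | z) (s' | a' | b' | r' | z') hne
      -- row: coordinate (s+1)
      · have hs2 : (s : ℕ) + 1 ≤ p - q := by have := s.isLt; omega
        have hs2' : (s' : ℕ) + 1 ≤ p - q := by have := s'.isLt; omega
        have hss : (s : ℕ) ≠ (s' : ℕ) := fun h => hne (by rw [Sum.inl.injEq]; ext; exact h)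
        show vent (τk • stdE (p + q) ((s' : ℕ) + 1)
          - vent x ((s' : ℕ) + 1) • wVec p q k) ((s : ℕ) + 1) = 0
        rw [vent_sub, hv0 _ _ _ (by omega) (by omega) (by omega),
          hw0 _ k _ hk1 hk2 (by omega) (by omega) (by omega) (by omega)]
        ring
      · have hs2 : (s : ℕ) + 1 ≤ p - q := by have := s.isLt; omega
        have hak : (a' : ℕ) + 1 < k := by have := a'.isLt; omega
        show vent (τk • wVec p q ((a' : ℕ) + 1)) ((s : ℕ) + 1) = 0
        exact hw0 _ _ _ (by omega) (by omega) (by omega) (by omega) (by omega) (by omega)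
      · have hs2 : (s : ℕ) + 1 ≤ p - q := by have := s.isLt; omega
        have hb2 : k + 1 + (b' : ℕ) ≤ q := by have := b'.isLt; omega
        show vent (τk • stdE (p + q) (p - (k + 1 + (b' : ℕ)) + 1)
          - vent x (p - (k + 1 + (b' : ℕ)) + 1) • wVec p q k) ((s : ℕ) + 1) = 0
        rw [vent_sub, hv0 _ _ _ (by omega) (by omega) (by omega),
          hw0 _ k _ hk1 hk2 (by omega) (by omega) (by omega) (by omega)]
        ring
      · have hs2 : (s : ℕ) + 1 ≤ p - q := by have := s.isLt; omega
        have hr2 : k + 1 + (r' : ℕ) ≤ q := by have := r'.isLt; omega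
        show vent (vent x (p + (k + 1 + (r' : ℕ))) • wVec p q k
          + τk • stdE (p + q) (p + (k + 1 + (r' : ℕ)))) ((s : ℕ) + 1) = 0
        rw [vent_add, hv0 _ _ _ (by omega) (by omega) (by omega),
          hw0 _ k _ hk1 hk2 (by omega) (by omega) (by omega) (by omega)]
        ring
      · have hs2 : (s : ℕ) + 1 ≤ p - q := by have := s.isLt; omega
        show vent (vent x (p + k) • stdE (p + q) (p - k + 1)
          + vent x (p - k + 1) • stdE (p + q) (p + k)) ((s : ℕ) + 1) = 0
        rw [vent_add, hv0 _ _ _ (by omega) (by omega) (by omega),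
          hv0 _ _ _ (by omega) (by omega) (by omega)]
        ring
      -- row: coordinate (p + (a+1))
      · have hak : (a : ℕ) + 1 < k := by have := a.isLt; omega
        have hs2' : (s' : ℕ) + 1 ≤ p - q := by have := s'.isLt; omega
        show vent (τk • stdE (p + q) ((s' : ℕ) + 1)
          - vent x ((s' : ℕ) + 1) • wVec p q k) (p + ((a : ℕ) + 1)) = 0
        rw [vent_sub, hv0 _ _ _ (by omega) (by omega) (by omega),
          hw0 _ k _ hk1 hk2 (by omega) (by omega) (by omega) (by omega)]
        ring
      · have hak : (a : ℕ) + 1 < k := by have := a.isLt; omega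
        have hak' : (a' : ℕ) + 1 < k := by have := a'.isLt; omega
        have haa : (a : ℕ) ≠ (a' : ℕ) := fun h => hne (by
          rw [Sum.inr.injEq, Sum.inl.injEq]; ext; exact h)
        show vent (τk • wVec p q ((a' : ℕ) + 1)) (p + ((a : ℕ) + 1)) = 0
        exact hw0 _ _ _ (by omega) (by omega) (by omega) (by omega) (by omega) (by omega)
      · have hak : (a : ℕ) + 1 < k := by have := a.isLt; omega
        have hb2 : k + 1 + (b' : ℕ) ≤ q := by have := b'.isLt; omega
        show vent (τk • stdE (p + q) (p - (k + 1 + (b' : ℕ)) + 1)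
          - vent x (p - (k + 1 + (b' : ℕ)) + 1) • wVec p q k) (p + ((a : ℕ) + 1)) = 0
        rw [vent_sub, hv0 _ _ _ (by omega) (by omega) (by omega),
          hw0 _ k _ hk1 hk2 (by omega) (by omega) (by omega) (by omega)]
        ring
      · have hak : (a : ℕ) + 1 < k := by have := a.isLt; omega
        have hr2 : k + 1 + (r' : ℕ) ≤ q := by have := r'.isLt; omega
        show vent (vent x (p + (k + 1 + (r' : ℕ))) • wVec p q k
          + τk • stdE (p + q) (p + (k + 1 + (r' : ℕ)))) (p + ((a : ℕ) + 1)) = 0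
        rw [vent_add, hv0 _ _ _ (by omega) (by omega) (by omega),
          hw0 _ k _ hk1 hk2 (by omega) (by omega) (by omega) (by omega)]
        ring
      · have hak : (a : ℕ) + 1 < k := by have := a.isLt; omega
        show vent (vent x (p + k) • stdE (p + q) (p - k + 1)
          + vent x (p - k + 1) • stdE (p + q) (p + k)) (p + ((a : ℕ) + 1)) = 0
        rw [vent_add, hv0 _ _ _ (by omega) (by omega) (by omega),
          hv0 _ _ _ (by omega) (by omega) (by omega)]
        ring
      -- row: coordinate (p - (k+1+b) + 1)
      · have hb2 : k + 1 + (b : ℕ) ≤ q := by have := b.isLt; omega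
        have hs2' : (s' : ℕ) + 1 ≤ p - q := by have := s'.isLt; omega
        show vent (τk • stdE (p + q) ((s' : ℕ) + 1)
          - vent x ((s' : ℕ) + 1) • wVec p q k) (p - (k + 1 + (b : ℕ)) + 1) = 0
        rw [vent_sub, hv0 _ _ _ (by omega) (by omega) (by omega),
          hw0 _ k _ hk1 hk2 (by omega) (by omega) (by omega) (by omega)]
        ring
      · have hb2 : k + 1 + (b : ℕ) ≤ q := by have := b.isLt; omega
        have hak' : (a' : ℕ) + 1 < k := by have := a'.isLt; omega
        show vent (τk • wVec p q ((a' : ℕ) + 1)) (p - (k + 1 + (b : ℕ)) + 1) = 0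
        exact hw0 _ _ _ (by omega) (by omega) (by omega) (by omega) (by omega) (by omega)
      · have hb2 : k + 1 + (b : ℕ) ≤ q := by have := b.isLt; omega
        have hb2' : k + 1 + (b' : ℕ) ≤ q := by have := b'.isLt; omega
        have hbb : (b : ℕ) ≠ (b' : ℕ) := fun h => hne (by
          rw [Sum.inr.injEq, Sum.inr.injEq, Sum.inl.injEq]; ext; exact h)
        show vent (τk • stdE (p + q) (p - (k + 1 + (b' : ℕ)) + 1)
          - vent x (p - (k + 1 + (b' : ℕ)) + 1) • wVec p q k) (p - (k + 1 + (b : ℕ)) + 1) = 0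
        rw [vent_sub, hv0 _ _ _ (by omega) (by omega) (by omega),
          hw0 _ k _ hk1 hk2 (by omega) (by omega) (by omega) (by omega)]
        ring
      · have hb2 : k + 1 + (b : ℕ) ≤ q := by have := b.isLt; omega
        have hr2 : k + 1 + (r' : ℕ) ≤ q := by have := r'.isLt; omega
        show vent (vent x (p + (k + 1 + (r' : ℕ))) • wVec p q k
          + τk • stdE (p + q) (p + (k + 1 + (r' : ℕ)))) (p - (k + 1 + (b : ℕ)) + 1) = 0
        rw [vent_add, hv0 _ _ _ (by omega) (by omega) (by omega),
          hw0 _ k _ hk1 hk2 (by omega) (by omega) (by omega) (by omega)]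
        ring
      · have hb2 : k + 1 + (b : ℕ) ≤ q := by have := b.isLt; omega
        show vent (vent x (p + k) • stdE (p + q) (p - k + 1)
          + vent x (p - k + 1) • stdE (p + q) (p + k)) (p - (k + 1 + (b : ℕ)) + 1) = 0
        rw [vent_add, hv0 _ _ _ (by omega) (by omega) (by omega),
          hv0 _ _ _ (by omega) (by omega) (by omega)]
        ring
      -- row: coordinate (p + (k+1+r))
      · have hr2 : k + 1 + (r : ℕ) ≤ q := by have := r.isLt; omega
        have hs2' : (s' : ℕ) + 1 ≤ p - q := by have := s'.isLt; omega
        show vent (τk • stdE (p + q) ((s' : ℕ) + 1)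
          - vent x ((s' : ℕ) + 1) • wVec p q k) (p + (k + 1 + (r : ℕ))) = 0
        rw [vent_sub, hv0 _ _ _ (by omega) (by omega) (by omega),
          hw0 _ k _ hk1 hk2 (by omega) (by omega) (by omega) (by omega)]
        ring
      · have hr2 : k + 1 + (r : ℕ) ≤ q := by have := r.isLt; omega
        have hak' : (a' : ℕ) + 1 < k := by have := a'.isLt; omega
        show vent (τk • wVec p q ((a' : ℕ) + 1)) (p + (k + 1 + (r : ℕ))) = 0
        exact hw0 _ _ _ (by omega) (by omega) (by omega) (by omega) (by omega) (by omega)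
      · have hr2 : k + 1 + (r : ℕ) ≤ q := by have := r.isLt; omega
        have hb2' : k + 1 + (b' : ℕ) ≤ q := by have := b'.isLt; omega
        show vent (τk • stdE (p + q) (p - (k + 1 + (b' : ℕ)) + 1)
          - vent x (p - (k + 1 + (b' : ℕ)) + 1) • wVec p q k) (p + (k + 1 + (r : ℕ))) = 0
        rw [vent_sub, hv0 _ _ _ (by omega) (by omega) (by omega),
          hw0 _ k _ hk1 hk2 (by omega) (by omega) (by omega) (by omega)]
        ring
      · have hr2 : k + 1 + (r : ℕ) ≤ q := by have := r.isLt; omega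
        have hr2' : k + 1 + (r' : ℕ) ≤ q := by have := r'.isLt; omega
        have hrr : (r : ℕ) ≠ (r' : ℕ) := fun h => hne (by
          rw [Sum.inr.injEq, Sum.inr.injEq, Sum.inr.injEq, Sum.inl.injEq]; ext; exact h)
        show vent (vent x (p + (k + 1 + (r' : ℕ))) • wVec p q k
          + τk • stdE (p + q) (p + (k + 1 + (r' : ℕ)))) (p + (k + 1 + (r : ℕ))) = 0
        rw [vent_add, hv0 _ _ _ (by omega) (by omega) (by omega),
          hw0 _ k _ hk1 hk2 (by omega) (by omega) (by omega) (by omega)]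
        ring
      · have hr2 : k + 1 + (r : ℕ) ≤ q := by have := r.isLt; omega
        show vent (vent x (p + k) • stdE (p + q) (p - k + 1)
          + vent x (p - k + 1) • stdE (p + q) (p + k)) (p + (k + 1 + (r : ℕ))) = 0
        rw [vent_add, hv0 _ _ _ (by omega) (by omega) (by omega),
          hv0 _ _ _ (by omega) (by omega) (by omega)]
        ring
      -- row: functional ip · w_k
      · have hs2' : (s' : ℕ) + 1 ≤ p - q := by have := s'.isLt; omega
        show ip p q (τk • stdE (p + q) ((s' : ℕ) + 1)
          - vent x ((s' : ℕ) + 1) • wVec p q k) (wVec p q k) = 0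
        rw [show ∀ (u w : Fin (p+q) → ℝ), u - w = u + (-1 : ℝ) • w from fun u w => by module,
          ip_add_left, ip_smul_left, ip_smul_left, ip_smul_left,
          ip_stdE_wVec_gen hq hpq (by omega) (by omega) hk1 hk2 (by omega) (by omega),
          ip_wVec_wVec hq hpq hk1 hk2 hk1 hk2]
        ring
      · have hak' : (a' : ℕ) + 1 < k := by have := a'.isLt; omega
        show ip p q (τk • wVec p q ((a' : ℕ) + 1)) (wVec p q k) = 0
        rw [ip_smul_left, ip_wVec_wVec hq hpq (by omega) (by omega) hk1 hk2]
        ring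
      · have hb2' : k + 1 + (b' : ℕ) ≤ q := by have := b'.isLt; omega
        show ip p q (τk • stdE (p + q) (p - (k + 1 + (b' : ℕ)) + 1)
          - vent x (p - (k + 1 + (b' : ℕ)) + 1) • wVec p q k) (wVec p q k) = 0
        rw [show ∀ (u w : Fin (p+q) → ℝ), u - w = u + (-1 : ℝ) • w from fun u w => by module,
          ip_add_left, ip_smul_left, ip_smul_left, ip_smul_left,
          ip_stdE_wVec_gen hq hpq (by omega) (by omega) hk1 hk2 (by omega) (by omega),
          ip_wVec_wVec hq hpq hk1 hk2 hk1 hk2]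
        ring
      · have hr2' : k + 1 + (r' : ℕ) ≤ q := by have := r'.isLt; omega
        show ip p q (vent x (p + (k + 1 + (r' : ℕ))) • wVec p q k
          + τk • stdE (p + q) (p + (k + 1 + (r' : ℕ)))) (wVec p q k) = 0
        rw [ip_add_left, ip_smul_left, ip_smul_left,
          ip_stdE_wVec_gen hq hpq (by omega) (by omega) hk1 hk2 (by omega) (by omega),
          ip_wVec_wVec hq hpq hk1 hk2 hk1 hk2]
        ring
      · exact absurd (by
          have hz1 : z = z' := Subsingleton.elim z z'
          rw [hz1]) hne
  have hge := finrank_ge_of_indep v hmem hind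
  simp only [Fintype.card_sum, Fintype.card_fin] at hge
  omega

end InfraK


/-- For `𝔤 := 𝔨₀ + 𝔞 + 𝔫` and `x ≠ 0`, `m := dim 𝔤 - dim 𝔤_x` satisfies:
(a) if `k` is the minimal index `1 ≤ k ≤ q` with `x^{p-k+1} + x^{p+k} ≠ 0`, then `m = p+q-k`;
(b) if `p > q`, `x^{p-i+1} + x^{p+i} = 0` for all `i`, and `x^j ≠ 0` for some
`1 ≤ j ≤ p-q`, then `m = p-1`;
(c) if `x^j = 0` for `1 ≤ j ≤ p-q` and `x^{p-i+1} + x^{p+i} = 0` for all `i`, then `m` is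
the largest `l ∈ {1, ..., q}` with `x^{p+l} ≠ 0`. -/
theorem KAN_orbit_dim (p q : ℕ) (hq : 1 ≤ q) (hpq : q ≤ p)
    (x : Fin (p + q) → ℝ) (hx : x ≠ 0) :
    (∀ k, 1 ≤ k → k ≤ q → vent x (p - k + 1) + vent x (p + k) ≠ 0 →
      (∀ i, 1 ≤ i → i < k → vent x (p - i + 1) + vent x (p + i) = 0) →
      Module.finrank ℝ ↥(kSub p q ⊔ aSub p q ⊔ nSub p q) -
        Module.finrank ℝ ↥((kSub p q ⊔ aSub p q ⊔ nSub p q) ⊓ kerAt x) = p + q - k) ∧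
    (q < p → (∀ i, 1 ≤ i → i ≤ q → vent x (p - i + 1) + vent x (p + i) = 0) →
      (∃ j, 1 ≤ j ∧ j ≤ p - q ∧ vent x j ≠ 0) →
      Module.finrank ℝ ↥(kSub p q ⊔ aSub p q ⊔ nSub p q) -
        Module.finrank ℝ ↥((kSub p q ⊔ aSub p q ⊔ nSub p q) ⊓ kerAt x) = p - 1) ∧
    ((∀ j, 1 ≤ j → j ≤ p - q → vent x j = 0) →
      (∀ i, 1 ≤ i → i ≤ q → vent x (p - i + 1) + vent x (p + i) = 0) →
      ∀ l, 1 ≤ l → l ≤ q → vent x (p + l) ≠ 0 →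
        (∀ j, l < j → j ≤ q → vent x (p + j) = 0) →
        Module.finrank ℝ ↥(kSub p q ⊔ aSub p q ⊔ nSub p q) -
          Module.finrank ℝ ↥((kSub p q ⊔ aSub p q ⊔ nSub p q) ⊓ kerAt x) = l) := by
  refine ⟨?_, ?_, ?_⟩
  · intro k hk1 hk2 hne hmin
    rw [rank_bridge (kSub p q ⊔ aSub p q ⊔ nSub p q) x]
    exact case_a hq hpq x hk1 hk2 hne hmin
  · rintro hqp hi ⟨j₀, h1, h2, h3⟩
    rw [rank_bridge (kSub p q ⊔ aSub p q ⊔ nSub p q) x]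
    exact case_b hq hqp x hi h1 h2 h3
  · intro hj hi l hl1 hl2 hxl htail
    rw [rank_bridge (kSub p q ⊔ aSub p q ⊔ nSub p q) x]
    exact case_c hq hpq x hj hi hl1 hl2 hxl htail
end

section
/- Let Λ₊ := { v ∈ ℝ^{p+q} : ⟨v,v⟩ = 0 and v^p + v^{p+1} > 0 }. For every x ∈ Λ₊, the AN-orbit of x equals Λ₊; in other words, Λ₊ is a single AN-orbit. -/
open Matrix

noncomputable section

namespace ANaux

variable {m : ℕ}

/-- `M ↦ M *ᵥ y` as a linear map. -/
def mulVecBy (y : Fin m → ℝ) : Matrix (Fin m) (Fin m) ℝ →ₗ[ℝ] (Fin m → ℝ) where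
  toFun M := M *ᵥ y
  map_add' A B := Matrix.add_mulVec A B y
  map_smul' c A := Matrix.smul_mulVec c A y

lemma exp_mulVec (X : Matrix (Fin m) (Fin m) ℝ) (y : Fin m → ℝ) :
    NormedSpace.exp X *ᵥ y = ∑' n : ℕ, ((n.factorial : ℝ))⁻¹ • (X ^ n *ᵥ y) := by
  letI : SeminormedRing (Matrix (Fin m) (Fin m) ℝ) := Matrix.linftyOpSemiNormedRing
  letI : NormedRing (Matrix (Fin m) (Fin m) ℝ) := Matrix.linftyOpNormedRing
  letI : NormedAlgebra ℝ (Matrix (Fin m) (Fin m) ℝ) := Matrix.linftyOpNormedAlgebra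
  have hsum : Summable fun n : ℕ => ((n.factorial : ℝ))⁻¹ • X ^ n :=
    NormedSpace.expSeries_summable' (𝕂 := ℝ) X
  set L := LinearMap.toContinuousLinearMap (mulVecBy y) with hLdef
  have hL : ∀ M, L M = M *ᵥ y := fun M => by
    rw [hLdef]; simp [mulVecBy]
  have hexp : NormedSpace.exp X = ∑' n : ℕ, ((n.factorial : ℝ))⁻¹ • X ^ n := by
    rw [NormedSpace.exp_eq_tsum ℝ]
  rw [hexp, ← hL, L.map_tsum hsum]
  refine tsum_congr fun n => ?_
  rw [_root_.map_smul, hL]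


lemma pow_mulVec_eigen {X : Matrix (Fin m) (Fin m) ℝ} {y : Fin m → ℝ} {mu : ℝ}
    (h : X *ᵥ y = mu • y) (n : ℕ) : X ^ n *ᵥ y = (mu ^ n) • y := by
  induction n with
  | zero => simp
  | succ k ih =>
    rw [pow_succ, ← Matrix.mulVec_mulVec, h, Matrix.mulVec_smul, ih, smul_smul, pow_succ]
    ring_nf

lemma exp_mulVec_eigen {X : Matrix (Fin m) (Fin m) ℝ} {y : Fin m → ℝ} {mu : ℝ}
    (h : X *ᵥ y = mu • y) : NormedSpace.exp X *ᵥ y = Real.exp mu • y := by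
  rw [exp_mulVec]
  have h1 : ∀ n : ℕ, ((n.factorial : ℝ))⁻¹ • (X ^ n *ᵥ y)
      = (((n.factorial : ℝ))⁻¹ * mu ^ n) • y := by
    intro n; rw [pow_mulVec_eigen h, smul_smul]
  rw [tsum_congr h1]
  have hsum : Summable fun n : ℕ => ((n.factorial : ℝ))⁻¹ * mu ^ n :=
    NormedSpace.expSeries_summable' (𝕂 := ℝ) mu
  rw [hsum.tsum_smul_const]
  congr 1
  rw [Real.exp_eq_exp_ℝ, NormedSpace.exp_eq_tsum ℝ]
  simp [smul_eq_mul]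

lemma exp_mulVec_nilp {X : Matrix (Fin m) (Fin m) ℝ} {y y1 y2 : Fin m → ℝ}
    (h1 : X *ᵥ y = y1) (h2 : X *ᵥ y1 = y2) (h3 : X *ᵥ y2 = 0) :
    NormedSpace.exp X *ᵥ y = y + y1 + (2⁻¹ : ℝ) • y2 := by
  rw [exp_mulVec]
  have hp : ∀ n : ℕ, 3 ≤ n → X ^ n *ᵥ y = 0 := by
    intro n hn
    obtain ⟨k, rfl⟩ : ∃ k, n = k + 3 := ⟨n - 3, by omega⟩
    rw [pow_add, ← Matrix.mulVec_mulVec]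
    have : X ^ 3 *ᵥ y = 0 := by
      rw [pow_succ, ← Matrix.mulVec_mulVec, h1, pow_two, ← Matrix.mulVec_mulVec, h2, h3]
    rw [this, Matrix.mulVec_zero]
  rw [tsum_eq_sum (s := Finset.range 3) (by
    intro n hn
    rw [hp n (by simpa using hn), smul_zero])]
  rw [Finset.sum_range_succ, Finset.sum_range_succ, Finset.sum_range_succ,
    Finset.sum_range_zero]
  have e0 : X ^ 0 *ᵥ y = y := by simp
  have e1 : X ^ 1 *ᵥ y = y1 := by rw [pow_one, h1]
  have e2 : X ^ 2 *ᵥ y = y2 := by rw [pow_two, ← Matrix.mulVec_mulVec, h1, h2]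
  rw [e0, e1, e2]
  norm_num


/-- sign of index `i` (0-based): `+1` for `i < p`, `-1` otherwise. -/
def sg (p : ℕ) {n : ℕ} (i : Fin n) : ℝ := if (i : ℕ) < p then 1 else -1

lemma sg_mul_self (p : ℕ) {n : ℕ} (i : Fin n) : sg p i * sg p i = 1 := by
  unfold sg; split <;> norm_num

lemma sg_ne_zero (p : ℕ) {n : ℕ} (i : Fin n) : sg p i ≠ 0 := by
  unfold sg; split <;> norm_num

variable {p q : ℕ}

/-- the vector `w₁ = e_p - e_{p+1}` (1-based). -/
def wv (p q : ℕ) : Fin (p + q) → ℝ := fun j =>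
  if (j : ℕ) + 1 = p then 1 else if (j : ℕ) = p then -1 else 0

/-- the vector `v₁ = e_p + e_{p+1}` (1-based). -/
def vv (p q : ℕ) : Fin (p + q) → ℝ := fun j =>
  if (j : ℕ) + 1 = p then 1 else if (j : ℕ) = p then 1 else 0

lemma vv_eq_sg_wv (j : Fin (p + q)) (hp : 1 ≤ p) : vv p q j = sg p j * wv p q j := by
  unfold vv wv sg
  by_cases h1 : (j : ℕ) + 1 = p
  · rw [if_pos h1, if_pos h1, if_pos (by omega)]; norm_num
  · by_cases h2 : (j : ℕ) = p
    · rw [if_neg h1, if_pos h2, if_neg h1, if_pos h2, if_neg (by omega)]; norm_num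
    · rw [if_neg h1, if_neg h2, if_neg h1, if_neg h2]; ring

section Indices

variable (a b : Fin (p + q)) (ha : (a : ℕ) + 1 = p) (hb : (b : ℕ) = p)

include ha hb in
lemma sum_mul_wv (f : Fin (p + q) → ℝ) :
    ∑ j, f j * wv p q j = f a - f b := by
  have key : ∀ j, f j * wv p q j = (if j = a then f j else 0) - (if j = b then f j else 0) := by
    intro j
    by_cases h1 : (j : ℕ) + 1 = p
    · have hja : j = a := Fin.ext (by omega)
      have hjb : ¬ j = b := fun h => by rw [Fin.ext_iff] at h; omega
      rw [if_pos hja, if_neg hjb]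
      unfold wv; rw [if_pos h1]; ring
    · by_cases h2 : (j : ℕ) = p
      · have hjb : j = b := Fin.ext (by omega)
        have hja : ¬ j = a := fun h => by rw [Fin.ext_iff] at h; omega
        rw [if_pos hjb, if_neg hja]
        unfold wv; rw [if_neg h1, if_pos h2]; ring
      · have hja : ¬ j = a := fun h => by rw [Fin.ext_iff] at h; omega
        have hjb : ¬ j = b := fun h => by rw [Fin.ext_iff] at h; omega
        rw [if_neg hja, if_neg hjb]
        unfold wv; rw [if_neg h1, if_neg h2]; ring
  rw [Finset.sum_congr rfl (fun j _ => key j), Finset.sum_sub_distrib,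
    Finset.sum_ite_eq' Finset.univ a f, Finset.sum_ite_eq' Finset.univ b f,
    if_pos (Finset.mem_univ a), if_pos (Finset.mem_univ b)]

include ha hb in
lemma sum_mul_vv (f : Fin (p + q) → ℝ) :
    ∑ j, f j * vv p q j = f a + f b := by
  have key : ∀ j, f j * vv p q j = (if j = a then f j else 0) + (if j = b then f j else 0) := by
    intro j
    by_cases h1 : (j : ℕ) + 1 = p
    · have hja : j = a := Fin.ext (by omega)
      have hjb : ¬ j = b := fun h => by rw [Fin.ext_iff] at h; omega
      rw [if_pos hja, if_neg hjb]
      unfold vv; rw [if_pos h1]; ring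
    · by_cases h2 : (j : ℕ) = p
      · have hjb : j = b := Fin.ext (by omega)
        have hja : ¬ j = a := fun h => by rw [Fin.ext_iff] at h; omega
        rw [if_pos hjb, if_neg hja]
        unfold vv; rw [if_neg h1, if_pos h2]; ring
      · have hja : ¬ j = a := fun h => by rw [Fin.ext_iff] at h; omega
        have hjb : ¬ j = b := fun h => by rw [Fin.ext_iff] at h; omega
        rw [if_neg hja, if_neg hjb]
        unfold vv; rw [if_neg h1, if_neg h2]; ring
  rw [Finset.sum_congr rfl (fun j _ => key j), Finset.sum_add_distrib,
    Finset.sum_ite_eq' Finset.univ a f, Finset.sum_ite_eq' Finset.univ b f,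
    if_pos (Finset.mem_univ a), if_pos (Finset.mem_univ b)]

include ha hb in
lemma mulVec_wv (X : Matrix (Fin (p + q)) (Fin (p + q)) ℝ) (i : Fin (p + q)) :
    (X *ᵥ wv p q) i = X i a - X i b :=
  sum_mul_wv a b ha hb (fun j => X i j)

include ha hb in
lemma mulVec_vv (X : Matrix (Fin (p + q)) (Fin (p + q)) ℝ) (i : Fin (p + q)) :
    (X *ᵥ vv p q) i = X i a + X i b :=
  sum_mul_vv a b ha hb (fun j => X i j)

include ha hb in
lemma ip_wv (v : Fin (p + q) → ℝ) : ip p q v (wv p q) = v a + v b := by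
  have h : ip p q v (wv p q) = ∑ j, (sg p j * v j) * wv p q j := by
    unfold ip sg; exact Finset.sum_congr rfl (fun j _ => rfl)
  rw [h, sum_mul_wv a b ha hb (fun j => sg p j * v j)]
  unfold sg
  rw [if_pos (show (a : ℕ) < p by omega), if_neg (show ¬ (b : ℕ) < p by omega)]
  ring

include ha hb in
lemma vent_sum_eq (v : Fin (p + q) → ℝ) :
    vent v p + vent v (p + 1) = v a + v b := by
  unfold vent
  have h1 : p - 1 < p + q := by omega
  have h2 : p + 1 - 1 < p + q := by omega
  rw [dif_pos h1, dif_pos h2]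
  congr 1
  · congr 1; exact Fin.ext (show p - 1 = (a : ℕ) by omega)
  · congr 1; exact Fin.ext (show p + 1 - 1 = (b : ℕ) by omega)

end Indices

lemma ent_eqF {n : ℕ} (X : Matrix (Fin n) (Fin n) ℝ) {i j : ℕ} (c d : Fin n)
    (hc : (c : ℕ) + 1 = i) (hd : (d : ℕ) + 1 = j) : ent X i j = X c d := by
  have h1 := c.isLt
  have h2 := d.isLt
  unfold ent
  rw [dif_pos ⟨show i - 1 < n by omega, show j - 1 < n by omega⟩]
  congr 1
  · exact Fin.ext (show i - 1 = (c : ℕ) by omega)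
  · exact Fin.ext (show j - 1 = (d : ℕ) by omega)

lemma so_entry {X : Matrix (Fin (p + q)) (Fin (p + q)) ℝ} (hX : X ∈ soSet p q)
    (i j : Fin (p + q)) : X j i * sg p j + sg p i * X i j = 0 := by
  have hmem : Xᵀ * Jmat p q + Jmat p q * X = 0 := hX
  have h := congrFun (congrFun hmem i) j
  unfold Jmat at h
  rw [Matrix.add_apply, Matrix.mul_diagonal, Matrix.diagonal_mul, Matrix.transpose_apply,
    Matrix.zero_apply] at h
  unfold sg
  exact h

lemma so_diag {X : Matrix (Fin (p + q)) (Fin (p + q)) ℝ} (hX : X ∈ soSet p q)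
    (i : Fin (p + q)) : X i i = 0 := by
  have h := so_entry hX i i
  unfold sg at h
  split at h <;> linarith

lemma so_mixed {X : Matrix (Fin (p + q)) (Fin (p + q)) ℝ} (hX : X ∈ soSet p q)
    {i j : Fin (p + q)} (hi : (i : ℕ) < p) (hj : ¬ (j : ℕ) < p) : X i j = X j i := by
  have h := so_entry hX i j
  unfold sg at h
  rw [if_neg hj, if_pos hi] at h
  linarith

lemma so_block {X : Matrix (Fin (p + q)) (Fin (p + q)) ℝ} (hX : X ∈ soSet p q)
    {i j : Fin (p + q)} (hi : ¬ (i : ℕ) < p) (hj : ¬ (j : ℕ) < p) : X i j = - X j i := by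
  have h := so_entry hX i j
  unfold sg at h
  rw [if_neg hj, if_neg hi] at h
  linarith

lemma JJ_eq_one : Jmat p q * Jmat p q = 1 := by
  unfold Jmat
  rw [Matrix.diagonal_mul_diagonal]
  rw [show (fun i : Fin (p+q) => (if (i : ℕ) < p then (1:ℝ) else -1) * (if (i : ℕ) < p then (1:ℝ) else -1)) = fun _ : Fin (p+q) => (1:ℝ) by
    funext i; split <;> norm_num]
  exact Matrix.diagonal_one

/-- `J` as a unit. -/
def Junit (p q : ℕ) : (Matrix (Fin (p + q)) (Fin (p + q)) ℝ)ˣ where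
  val := Jmat p q
  inv := Jmat p q
  val_inv := JJ_eq_one
  inv_val := JJ_eq_one

lemma exp_neg_mul_exp (X : Matrix (Fin (p + q)) (Fin (p + q)) ℝ) :
    NormedSpace.exp (-X) * NormedSpace.exp X = 1 := by
  rw [← Matrix.exp_add_of_commute (-X) X (Commute.neg_left (Commute.refl X)),
    neg_add_cancel, NormedSpace.exp_zero]

lemma exp_preserves {X : Matrix (Fin (p + q)) (Fin (p + q)) ℝ} (hX : X ∈ soSet p q) :
    (NormedSpace.exp X)ᵀ * Jmat p q * NormedSpace.exp X = Jmat p q := by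
  have hmem : Xᵀ * Jmat p q + Jmat p q * X = 0 := hX
  have h1 : Xᵀ * Jmat p q = Jmat p q * (-X) := by
    rw [Matrix.mul_neg]
    exact eq_neg_of_add_eq_zero_left hmem
  have h2 : Xᵀ = Jmat p q * (-X) * Jmat p q := by
    calc Xᵀ = Xᵀ * (Jmat p q * Jmat p q) := by rw [JJ_eq_one, Matrix.mul_one]
    _ = (Xᵀ * Jmat p q) * Jmat p q := by rw [Matrix.mul_assoc]
    _ = Jmat p q * (-X) * Jmat p q := by rw [h1]
  have h3 : (NormedSpace.exp X)ᵀ = Jmat p q * NormedSpace.exp (-X) * Jmat p q := by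
    rw [← Matrix.exp_transpose, h2]
    have := Matrix.exp_units_conj (Junit p q) (-X)
    exact this
  rw [h3]
  calc Jmat p q * NormedSpace.exp (-X) * Jmat p q * Jmat p q * NormedSpace.exp X
      = Jmat p q * NormedSpace.exp (-X) * (Jmat p q * Jmat p q) * NormedSpace.exp X := by
        rw [Matrix.mul_assoc (Jmat p q * NormedSpace.exp (-X))]
    _ = Jmat p q * (NormedSpace.exp (-X) * NormedSpace.exp X) := by
        rw [JJ_eq_one, Matrix.mul_one, Matrix.mul_assoc]
    _ = Jmat p q := by rw [exp_neg_mul_exp, Matrix.mul_one]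

lemma ent_cases {n : ℕ} (X : Matrix (Fin n) (Fin n) ℝ) {i j : ℕ} (hi1 : 1 ≤ i) (hi2 : i ≤ n)
    (hj1 : 1 ≤ j) (hj2 : j ≤ n) :
    ∃ (c d : Fin n), (c : ℕ) + 1 = i ∧ (d : ℕ) + 1 = j ∧ ent X i j = X c d := by
  refine ⟨⟨i - 1, by omega⟩, ⟨j - 1, by omega⟩, show i - 1 + 1 = i by omega,
    show j - 1 + 1 = j by omega, ?_⟩
  exact ent_eqF X _ _ (show i - 1 + 1 = i by omega) (show j - 1 + 1 = j by omega)

lemma so_of_entry {X : Matrix (Fin (p + q)) (Fin (p + q)) ℝ}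
    (h : ∀ i j : Fin (p + q), X j i * sg p j + sg p i * X i j = 0) : X ∈ soSet p q := by
  show Xᵀ * Jmat p q + Jmat p q * X = 0
  ext i j
  unfold Jmat
  rw [Matrix.add_apply, Matrix.mul_diagonal, Matrix.diagonal_mul, Matrix.transpose_apply,
    Matrix.zero_apply]
  have hh := h i j
  unfold sg at hh
  exact hh

section Bash

variable (hq : 1 ≤ q) (hpq : q ≤ p) (a b : Fin (p + q)) (ha : (a : ℕ) + 1 = p)
  (hb : (b : ℕ) = p)

include hq hpq ha hb in
lemma n_fix_wv {X : Matrix (Fin (p + q)) (Fin (p + q)) ℝ} (hX : X ∈ nSet p q) :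
    X *ᵥ wv p q = 0 := by
  obtain ⟨hso, h1, h2, h3, h4, h5⟩ := hX
  funext i
  have hi2 := i.isLt
  rw [Pi.zero_apply, mulVec_wv a b ha hb, sub_eq_zero]
  have hb1 : (b : ℕ) + 1 = p + 1 := by omega
  have hXab : X a b = 0 := by
    have h := h2 1 le_rfl hq
    rw [show p - 1 + 1 = p from by omega] at h
    rw [ent_eqF X a b ha hb1] at h
    exact h
  by_cases c1 : (i : ℕ) + 1 ≤ p - q
  · have h := h3 ((i : ℕ) + 1) 1 (by omega) c1 le_rfl hq
    rw [show p - 1 + 1 = p from by omega] at h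
    rw [ent_eqF X i a rfl ha, ent_eqF X i b rfl hb1] at h
    exact h
  · by_cases c2 : (i : ℕ) + 1 < p
    · have h := h4 1 (p - (i : ℕ)) le_rfl (by omega) (by omega)
      rw [show p + 1 - (p - (i : ℕ)) = (i : ℕ) + 1 from by omega,
        show p + 1 - 1 = p from by omega] at h
      rw [ent_eqF X i a rfl ha, ent_eqF X i b rfl hb1] at h
      exact h
    · by_cases c3 : (i : ℕ) + 1 = p
      · have hia : i = a := Fin.ext (by omega)
        rw [hia, so_diag hso a, hXab]
      · by_cases c4 : (i : ℕ) = p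
        · have hib : i = b := Fin.ext (by omega)
          rw [hib, so_diag hso b,
            ← so_mixed hso (show (a : ℕ) < p by omega) (show ¬ (b : ℕ) < p by omega)]
          exact hXab
        · have hi1 : ¬ (i : ℕ) < p := by omega
          have hXai : X a i = X i a := so_mixed hso (by omega) hi1
          have h := h5 1 ((i : ℕ) + 1 - p) le_rfl (by omega) (by omega)
          rw [show p + ((i : ℕ) + 1 - p) = (i : ℕ) + 1 from by omega,
            show p + 1 - 1 = p from by omega] at h
          rw [ent_eqF X b i hb1 rfl, ent_eqF X a i ha rfl] at h
          have h2' : X i b = - X b i := so_block hso hi1 (by omega)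
          rw [← hXai, h2', h]
          ring

include hq hpq in
lemma a_sub_so {X : Matrix (Fin (p + q)) (Fin (p + q)) ℝ} (hA : X ∈ aSet p q) :
    X ∈ soSet p q := by
  obtain ⟨a1, a2⟩ := hA
  apply so_of_entry
  intro i j
  have hi2 := i.isLt
  have hj2 := j.isLt
  by_cases hsp : ∃ l, 1 ≤ l ∧ l ≤ q ∧
      (((i : ℕ) + 1 = p - l + 1 ∧ (j : ℕ) + 1 = p + l) ∨
        ((i : ℕ) + 1 = p + l ∧ (j : ℕ) + 1 = p - l + 1))
  · obtain ⟨l, hl1, hl2, hor⟩ := hsp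
    have heq : X i j = X j i := by
      have h := a1 l hl1 hl2
      rcases hor with ⟨hu, hv⟩ | ⟨hu, hv⟩
      · rw [ent_eqF X i j hu hv, ent_eqF X j i hv hu] at h
        exact h
      · rw [ent_eqF X j i hv hu, ent_eqF X i j hu hv] at h
        exact h.symm
    have hsg : sg p i * sg p j = -1 := by
      unfold sg
      rcases hor with ⟨hu, hv⟩ | ⟨hu, hv⟩
      · rw [if_pos (show (i : ℕ) < p by omega), if_neg (show ¬ (j : ℕ) < p by omega)]
        norm_num
      · rw [if_neg (show ¬ (i : ℕ) < p by omega), if_pos (show (j : ℕ) < p by omega)]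
        norm_num
    have h1 := sg_mul_self p i
    have h2 : sg p j = - sg p i := by
      calc sg p j = sg p i * sg p i * sg p j := by rw [h1]; ring
      _ = - sg p i := by rw [mul_assoc, hsg]; ring
    rw [heq, h2]
    ring
  · have hz1 : X i j = 0 := by
      have h := a2 ((i : ℕ) + 1) ((j : ℕ) + 1) (by omega) (by omega) (by omega) (by omega)
        (by
          rintro ⟨l, hl1, hl2, hor⟩
          exact hsp ⟨l, hl1, hl2, hor⟩)
      rw [ent_eqF X i j rfl rfl] at h
      exact h
    have hz2 : X j i = 0 := by
      have h := a2 ((j : ℕ) + 1) ((i : ℕ) + 1) (by omega) (by omega) (by omega) (by omega)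
        (by
          rintro ⟨l, hl1, hl2, hor⟩
          exact hsp ⟨l, hl1, hl2, by tauto⟩)
      rw [ent_eqF X j i rfl rfl] at h
      exact h
    rw [hz1, hz2]
    ring

include hq hpq ha hb in
lemma a_mulVec_wv {X : Matrix (Fin (p + q)) (Fin (p + q)) ℝ} (hA : X ∈ aSet p q) :
    X *ᵥ wv p q = (- X a b) • wv p q := by
  obtain ⟨a1, a2⟩ := hA
  have hb1 : (b : ℕ) + 1 = p + 1 := by omega
  have hvan : ∀ (c d : Fin (p + q)),
      (∀ l, 1 ≤ l → l ≤ q →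
        ¬(((c : ℕ) + 1 = p - l + 1 ∧ (d : ℕ) + 1 = p + l) ∨
          ((c : ℕ) + 1 = p + l ∧ (d : ℕ) + 1 = p - l + 1))) → X c d = 0 := by
    intro c d hcd
    have hc2 := c.isLt
    have hd2 := d.isLt
    have h := a2 ((c : ℕ) + 1) ((d : ℕ) + 1) (by omega) (by omega) (by omega) (by omega)
      (by rintro ⟨l, hl1, hl2, hor⟩; exact hcd l hl1 hl2 hor)
    rw [ent_eqF X c d rfl rfl] at h
    exact h
  have hXba : X b a = X a b := by
    have h := a1 1 le_rfl hq
    rw [show p - 1 + 1 = p from by omega] at h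
    rw [ent_eqF X a b ha hb1, ent_eqF X b a hb1 ha] at h
    exact h.symm
  funext i
  rw [mulVec_wv a b ha hb, Pi.smul_apply, smul_eq_mul]
  unfold wv
  by_cases c1 : (i : ℕ) + 1 = p
  · have hia : i = a := Fin.ext (by omega)
    have h0 : X a a = 0 := hvan a a (by intro l hl1 hl2 hor; rcases hor with ⟨hu, hv⟩ | ⟨hu, hv⟩ <;> omega)
    rw [if_pos c1, hia, h0]
    ring
  · by_cases c2 : (i : ℕ) = p
    · have hib : i = b := Fin.ext (by omega)
      have h0 : X b b = 0 := hvan b b (by intro l hl1 hl2 hor; rcases hor with ⟨hu, hv⟩ | ⟨hu, hv⟩ <;> omega)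
      rw [if_neg c1, if_pos c2, hib, h0, hXba]
      ring
    · have h0a : X i a = 0 := hvan i a (by intro l hl1 hl2 hor; rcases hor with ⟨hu, hv⟩ | ⟨hu, hv⟩ <;> omega)
      have h0b : X i b = 0 := hvan i b (by intro l hl1 hl2 hor; rcases hor with ⟨hu, hv⟩ | ⟨hu, hv⟩ <;> omega)
      rw [if_neg c1, if_neg c2, h0a, h0b]
      ring

end Bash

/-- generator of `𝔞` corresponding to `l = 1`. -/
def Smat (p q : ℕ) : Matrix (Fin (p + q)) (Fin (p + q)) ℝ := fun i j =>
  if ((i : ℕ) + 1 = p ∧ (j : ℕ) = p) ∨ ((i : ℕ) = p ∧ (j : ℕ) + 1 = p) then 1 else 0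

lemma Smat_apply (p q : ℕ) (i j : Fin (p + q)) :
    Smat p q i j =
      if ((i : ℕ) + 1 = p ∧ (j : ℕ) = p) ∨ ((i : ℕ) = p ∧ (j : ℕ) + 1 = p) then 1 else 0 :=
  rfl

/-- the matrix `w₁ (Jc)ᵀ - c (J w₁)ᵀ`, an element of `𝔫` when `c` vanishes at positions
`p` and `p+1`. -/
def Xmat (p q : ℕ) (c : Fin (p + q) → ℝ) : Matrix (Fin (p + q)) (Fin (p + q)) ℝ :=
  fun i j => wv p q i * (sg p j * c j) - c i * vv p q j

lemma Xmat_apply (p q : ℕ) (c : Fin (p + q) → ℝ) (i j : Fin (p + q)) :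
    Xmat p q c i j = wv p q i * (sg p j * c j) - c i * vv p q j := rfl

section Bash2

variable (hq : 1 ≤ q) (hpq : q ≤ p) (a b : Fin (p + q)) (ha : (a : ℕ) + 1 = p)
  (hb : (b : ℕ) = p)

include hq hpq in
lemma smat_mem_aSet : Smat p q ∈ aSet p q := by
  constructor
  · intro l hl1 hl2
    obtain ⟨c, d, hc, hd, he⟩ := ent_cases (Smat p q) (i := p - l + 1) (j := p + l)
      (by omega) (by omega) (by omega) (by omega)
    obtain ⟨e, f, hee, hf, he2⟩ := ent_cases (Smat p q) (i := p + l) (j := p - l + 1)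
      (by omega) (by omega) (by omega) (by omega)
    rw [he, he2, Smat_apply, Smat_apply]
    by_cases hl : l = 1
    · rw [if_pos (by omega), if_pos (by omega)]
    · rw [if_neg (by omega), if_neg (by omega)]
  · intro i j hi1 hi2 hj1 hj2 hne
    obtain ⟨c, d, hc, hd, he⟩ := ent_cases (Smat p q) (i := i) (j := j) hi1 hi2 hj1 hj2
    rw [he, Smat_apply, if_neg]
    rintro (⟨hu, hv⟩ | ⟨hu, hv⟩)
    · exact hne ⟨1, le_rfl, hq, Or.inl ⟨by omega, by omega⟩⟩
    · exact hne ⟨1, le_rfl, hq, Or.inr ⟨by omega, by omega⟩⟩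

include hq hpq ha hb in
lemma smat_wv : Smat p q *ᵥ wv p q = (-1 : ℝ) • wv p q := by
  funext i
  rw [mulVec_wv a b ha hb, Pi.smul_apply, smul_eq_mul, Smat_apply, Smat_apply]
  unfold wv
  by_cases c1 : (i : ℕ) + 1 = p
  · rw [if_neg (by omega), if_pos (Or.inl ⟨c1, hb⟩), if_pos c1]
    norm_num
  · by_cases c2 : (i : ℕ) = p
    · rw [if_pos (Or.inr ⟨c2, ha⟩), if_neg (by omega), if_neg c1, if_pos c2]
      norm_num
    · rw [if_neg (by omega), if_neg (by omega), if_neg c1, if_neg c2]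
      norm_num

include hq hpq ha hb in
lemma smat_vv : Smat p q *ᵥ vv p q = vv p q := by
  funext i
  rw [mulVec_vv a b ha hb, Smat_apply, Smat_apply]
  unfold vv
  by_cases c1 : (i : ℕ) + 1 = p
  · rw [if_neg (by omega), if_pos (Or.inl ⟨c1, hb⟩), if_pos c1]
    norm_num
  · by_cases c2 : (i : ℕ) = p
    · rw [if_pos (Or.inr ⟨c2, ha⟩), if_neg (by omega), if_neg c1, if_pos c2]
      norm_num
    · rw [if_neg (by omega), if_neg (by omega), if_neg c1, if_neg c2]
      norm_num

variable {c : Fin (p + q) → ℝ} (hca : c a = 0) (hcb : c b = 0)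

include hq hpq ha hb hca hcb in
lemma xmat_mem_nSet : Xmat p q c ∈ nSet p q := by
  have hp : 1 ≤ p := le_trans hq hpq
  refine ⟨?_, ?_, ?_, ?_, ?_, ?_⟩
  · apply so_of_entry
    intro i j
    rw [Xmat_apply, Xmat_apply, vv_eq_sg_wv i hp, vv_eq_sg_wv j hp]
    ring
  · intro i j hi1 hi2 hj1 hj2
    obtain ⟨cc, dd, hcc, hdd, he⟩ := ent_cases (Xmat p q c) (i := i) (j := j)
      hi1 (by omega) hj1 (by omega)
    rw [he, Xmat_apply]
    have hw : wv p q cc = 0 := by unfold wv; rw [if_neg (by omega), if_neg (by omega)]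
    have hv : vv p q dd = 0 := by unfold vv; rw [if_neg (by omega), if_neg (by omega)]
    rw [hw, hv]
    ring
  · intro l hl1 hl2
    obtain ⟨cc, dd, hcc, hdd, he⟩ := ent_cases (Xmat p q c) (i := p - l + 1) (j := p + l)
      (by omega) (by omega) (by omega) (by omega)
    rw [he, Xmat_apply]
    by_cases hl : l = 1
    · have hcca : cc = a := Fin.ext (by omega)
      have hddb : dd = b := Fin.ext (by omega)
      rw [hcca, hddb, hca, hcb]
      ring
    · have hw : wv p q cc = 0 := by unfold wv; rw [if_neg (by omega), if_neg (by omega)]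
      have hv : vv p q dd = 0 := by unfold vv; rw [if_neg (by omega), if_neg (by omega)]
      rw [hw, hv]
      ring
  · intro k l hk1 hk2 hl1 hl2
    obtain ⟨cc, dd, hcc, hdd, he⟩ := ent_cases (Xmat p q c) (i := k) (j := p - l + 1)
      (by omega) (by omega) (by omega) (by omega)
    obtain ⟨ee, ff, hee, hf, he2⟩ := ent_cases (Xmat p q c) (i := k) (j := p + l)
      (by omega) (by omega) (by omega) (by omega)
    have hce : cc = ee := Fin.ext (by omega)
    rw [he, he2, Xmat_apply, Xmat_apply, hce]
    have hw : wv p q ee = 0 := by unfold wv; rw [if_neg (by omega), if_neg (by omega)]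
    rw [hw]
    by_cases hl : l = 1
    · have hv1 : vv p q dd = 1 := by unfold vv; rw [if_pos (by omega)]
      have hv2 : vv p q ff = 1 := by unfold vv; rw [if_neg (by omega), if_pos (by omega)]
      rw [hv1, hv2]
      ring
    · have hv1 : vv p q dd = 0 := by unfold vv; rw [if_neg (by omega), if_neg (by omega)]
      have hv2 : vv p q ff = 0 := by unfold vv; rw [if_neg (by omega), if_neg (by omega)]
      rw [hv1, hv2]
      ring
  · intro i j hi1 hij hj2
    obtain ⟨cc, dd, hcc, hdd, he⟩ := ent_cases (Xmat p q c) (i := p + 1 - j) (j := p + 1 - i)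
      (by omega) (by omega) (by omega) (by omega)
    obtain ⟨ee, ff, hee, hf, he2⟩ := ent_cases (Xmat p q c) (i := p + 1 - j) (j := p + i)
      (by omega) (by omega) (by omega) (by omega)
    have hce : cc = ee := Fin.ext (by omega)
    rw [he, he2, Xmat_apply, Xmat_apply, hce]
    have hw : wv p q ee = 0 := by unfold wv; rw [if_neg (by omega), if_neg (by omega)]
    rw [hw]
    by_cases hi : i = 1
    · have hv1 : vv p q dd = 1 := by unfold vv; rw [if_pos (by omega)]
      have hv2 : vv p q ff = 1 := by unfold vv; rw [if_neg (by omega), if_pos (by omega)]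
      rw [hv1, hv2]
      ring
    · have hv1 : vv p q dd = 0 := by unfold vv; rw [if_neg (by omega), if_neg (by omega)]
      have hv2 : vv p q ff = 0 := by unfold vv; rw [if_neg (by omega), if_neg (by omega)]
      rw [hv1, hv2]
      ring
  · intro i j hi1 hij hj2
    obtain ⟨cc, dd, hcc, hdd, he⟩ := ent_cases (Xmat p q c) (i := p + i) (j := p + j)
      (by omega) (by omega) (by omega) (by omega)
    obtain ⟨ee, ff, hee, hf, he2⟩ := ent_cases (Xmat p q c) (i := p + 1 - i) (j := p + j)
      (by omega) (by omega) (by omega) (by omega)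
    have hdf : dd = ff := Fin.ext (by omega)
    rw [he, he2, Xmat_apply, Xmat_apply, hdf]
    have hv : vv p q ff = 0 := by unfold vv; rw [if_neg (by omega), if_neg (by omega)]
    have hsgf : sg p ff = -1 := by unfold sg; rw [if_neg (by omega)]
    rw [hv, hsgf]
    by_cases hi : i = 1
    · have hw1 : wv p q cc = -1 := by unfold wv; rw [if_neg (by omega), if_pos (by omega)]
      have hw2 : wv p q ee = 1 := by unfold wv; rw [if_pos (by omega)]
      rw [hw1, hw2]
      ring
    · have hw1 : wv p q cc = 0 := by unfold wv; rw [if_neg (by omega), if_neg (by omega)]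
      have hw2 : wv p q ee = 0 := by unfold wv; rw [if_neg (by omega), if_neg (by omega)]
      rw [hw1, hw2]
      ring

end Bash2

lemma xmat_mulVec (c y : Fin (p + q) → ℝ) :
    Xmat p q c *ᵥ y = (∑ j, sg p j * c j * y j) • wv p q - (∑ j, vv p q j * y j) • c := by
  funext i
  have h1 : (Xmat p q c *ᵥ y) i = ∑ j, (wv p q i * (sg p j * c j) - c i * vv p q j) * y j := by
    simp [Matrix.mulVec, dotProduct, Xmat_apply]
  rw [h1, Pi.sub_apply, Pi.smul_apply, Pi.smul_apply, smul_eq_mul, smul_eq_mul]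
  calc ∑ j, (wv p q i * (sg p j * c j) - c i * vv p q j) * y j
      = ∑ j, (wv p q i * (sg p j * c j * y j) - c i * (vv p q j * y j)) :=
        Finset.sum_congr rfl fun j _ => by ring
    _ = wv p q i * ∑ j, sg p j * c j * y j - c i * ∑ j, vv p q j * y j := by
        rw [Finset.sum_sub_distrib, Finset.mul_sum, Finset.mul_sum]
    _ = (∑ j, sg p j * c j * y j) * wv p q i - (∑ j, vv p q j * y j) * c i := by ring

section Bash3

variable (hq : 1 ≤ q) (hpq : q ≤ p) (a b : Fin (p + q)) (ha : (a : ℕ) + 1 = p)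
  (hb : (b : ℕ) = p) {c : Fin (p + q) → ℝ} (hca : c a = 0) (hcb : c b = 0)

include hq hpq ha hb hca hcb in
lemma xmat_vv : Xmat p q c *ᵥ vv p q = (-2 : ℝ) • c := by
  rw [xmat_mulVec]
  have h1 : ∑ j, sg p j * c j * vv p q j = 0 := by
    rw [sum_mul_vv a b ha hb (fun j => sg p j * c j), hca, hcb]
    ring
  have h2 : ∑ j, vv p q j * vv p q j = 2 := by
    rw [sum_mul_vv a b ha hb (vv p q)]
    unfold vv
    rw [if_pos ha, if_neg (by omega), if_pos hb]
    norm_num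
  rw [h1, h2, zero_smul, zero_sub, ← neg_smul]

include hq hpq ha hb hca hcb in
lemma xmat_cc : Xmat p q c *ᵥ c = (∑ j, sg p j * c j * c j) • wv p q := by
  rw [xmat_mulVec]
  have h2 : ∑ j, vv p q j * c j = 0 := by
    rw [Finset.sum_congr rfl (fun j _ => mul_comm (vv p q j) (c j)),
      sum_mul_vv a b ha hb c, hca, hcb]
    ring
  rw [h2, zero_smul, sub_zero]

include hq hpq ha hb hca hcb in
lemma xmat_wv0 : Xmat p q c *ᵥ wv p q = 0 := by
  rw [xmat_mulVec]
  have h1 : ∑ j, sg p j * c j * wv p q j = 0 := by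
    rw [sum_mul_wv a b ha hb (fun j => sg p j * c j), hca, hcb]
    ring
  have h2 : ∑ j, vv p q j * wv p q j = 0 := by
    rw [sum_mul_wv a b ha hb (vv p q)]
    unfold vv
    rw [if_pos ha, if_neg (by omega), if_pos hb]
    norm_num
  rw [h1, h2, zero_smul, zero_smul, sub_zero]

include hq hpq ha hb hca hcb in
lemma exp_xmat_vv : NormedSpace.exp (Xmat p q c) *ᵥ vv p q
    = vv p q + (-2 : ℝ) • c + (- ∑ j, sg p j * c j * c j) • wv p q := by
  have h1 := xmat_vv hq hpq a b ha hb hca hcb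
  have h2 : Xmat p q c *ᵥ ((-2 : ℝ) • c)
      = ((-2 : ℝ) * ∑ j, sg p j * c j * c j) • wv p q := by
    rw [Matrix.mulVec_smul, xmat_cc hq hpq a b ha hb hca hcb, smul_smul]
  have h3 : Xmat p q c *ᵥ (((-2 : ℝ) * ∑ j, sg p j * c j * c j) • wv p q) = 0 := by
    rw [Matrix.mulVec_smul, xmat_wv0 hq hpq a b ha hb hca hcb, smul_zero]
  rw [exp_mulVec_nilp h1 h2 h3]
  congr 1
  rw [smul_smul]
  congr 1
  ring

end Bash3

lemma sandwich {n : ℕ} {A B J : Matrix (Fin n) (Fin n) ℝ}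
    (hA : Aᵀ * J * A = J) (hB : Bᵀ * J * B = J) : (A * B)ᵀ * J * (A * B) = J := by
  rw [Matrix.transpose_mul]
  calc Bᵀ * Aᵀ * J * (A * B) = Bᵀ * (Aᵀ * J * A) * B := by noncomm_ring
    _ = J := by rw [hA, hB]

/-- The key invariant predicate for elements of `AN`. -/
def goodP (p q : ℕ) (g : (Matrix (Fin (p + q)) (Fin (p + q)) ℝ)ˣ) : Prop :=
  (↑g : Matrix (Fin (p + q)) (Fin (p + q)) ℝ)ᵀ * Jmat p q *
      (↑g : Matrix (Fin (p + q)) (Fin (p + q)) ℝ) = Jmat p q ∧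
  ∃ lam : ℝ, 0 < lam ∧
    (↑g : Matrix (Fin (p + q)) (Fin (p + q)) ℝ) *ᵥ wv p q = lam • wv p q

section Good

variable (hq : 1 ≤ q) (hpq : q ≤ p) (a b : Fin (p + q)) (ha : (a : ℕ) + 1 = p)
  (hb : (b : ℕ) = p)

include hq hpq ha hb in
lemma good_of_mem {g : (Matrix (Fin (p + q)) (Fin (p + q)) ℝ)ˣ} (hg : g ∈ ANgrp p q) :
    goodP p q g := by
  unfold ANgrp at hg
  induction hg using Subgroup.closure_induction with
  | mem x hx =>
    obtain ⟨X, hX, rfl⟩ := hx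
    have hcoe : ((expUnit X : (Matrix (Fin (p + q)) (Fin (p + q)) ℝ)ˣ) :
        Matrix (Fin (p + q)) (Fin (p + q)) ℝ) = NormedSpace.exp X := rfl
    rcases hX with hXa | hXn
    · refine ⟨?_, Real.exp (- X a b), Real.exp_pos _, ?_⟩
      · rw [hcoe]
        exact exp_preserves (a_sub_so hq hpq hXa)
      · rw [hcoe]
        exact exp_mulVec_eigen (a_mulVec_wv hq hpq a b ha hb hXa)
    · refine ⟨?_, Real.exp 0, Real.exp_pos _, ?_⟩
      · rw [hcoe]
        exact exp_preserves hXn.1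
      · rw [hcoe]
        refine exp_mulVec_eigen ?_
        rw [n_fix_wv hq hpq a b ha hb hXn, zero_smul]
  | one =>
    refine ⟨?_, 1, one_pos, ?_⟩
    · rw [Units.val_one, Matrix.transpose_one, Matrix.one_mul, Matrix.mul_one]
    · rw [Units.val_one, Matrix.one_mulVec, one_smul]
  | mul x y hx hy ihx ihy =>
    obtain ⟨f1, l1, hl1, he1⟩ := ihx
    obtain ⟨f2, l2, hl2, he2⟩ := ihy
    refine ⟨?_, l1 * l2, mul_pos hl1 hl2, ?_⟩
    · rw [Units.val_mul]
      exact sandwich f1 f2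
    · rw [Units.val_mul, ← Matrix.mulVec_mulVec, he2, Matrix.mulVec_smul, he1, smul_smul,
        mul_comm l2 l1]
  | inv x hx ih =>
    obtain ⟨f1, l1, hl1, he1⟩ := ih
    refine ⟨?_, l1⁻¹, inv_pos.mpr hl1, ?_⟩
    · calc ((↑x⁻¹ : Matrix (Fin (p + q)) (Fin (p + q)) ℝ))ᵀ * Jmat p q * ↑x⁻¹
          = (↑x⁻¹ : Matrix (Fin (p + q)) (Fin (p + q)) ℝ)ᵀ *
            ((↑x : Matrix (Fin (p + q)) (Fin (p + q)) ℝ)ᵀ * Jmat p q * ↑x) * ↑x⁻¹ := by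
            rw [f1]
        _ = ((↑x : Matrix (Fin (p + q)) (Fin (p + q)) ℝ) * ↑x⁻¹)ᵀ * Jmat p q *
            ((↑x : Matrix (Fin (p + q)) (Fin (p + q)) ℝ) * ↑x⁻¹) := by
            rw [Matrix.transpose_mul]
            noncomm_ring
        _ = Jmat p q := by
            rw [Units.mul_inv, Matrix.transpose_one, Matrix.one_mul, Matrix.mul_one]
    · have h2 : (↑x⁻¹ : Matrix (Fin (p + q)) (Fin (p + q)) ℝ) *ᵥ
          ((↑x : Matrix (Fin (p + q)) (Fin (p + q)) ℝ) *ᵥ wv p q) = wv p q := by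
        rw [Matrix.mulVec_mulVec, Units.inv_mul, Matrix.one_mulVec]
      rw [he1, Matrix.mulVec_smul] at h2
      have h3 := congrArg (fun w => l1⁻¹ • w) h2
      simp only [smul_smul] at h3
      rw [inv_mul_cancel₀ (ne_of_gt hl1), one_smul] at h3
      exact h3

end Good

lemma ip_via_dot (x y : Fin (p + q) → ℝ) : ip p q x y = x ⬝ᵥ (Jmat p q *ᵥ y) := by
  unfold ip Jmat
  rw [dotProduct]
  refine Finset.sum_congr rfl fun i _ => ?_
  rw [Matrix.mulVec_diagonal]
  ring

lemma dot_shift (A : Matrix (Fin (p + q)) (Fin (p + q)) ℝ) (x y : Fin (p + q) → ℝ) :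
    (A *ᵥ x) ⬝ᵥ y = x ⬝ᵥ (Aᵀ *ᵥ y) := by
  conv_rhs => rw [Matrix.dotProduct_mulVec, Matrix.vecMul_transpose]

lemma ip_invariant {A : Matrix (Fin (p + q)) (Fin (p + q)) ℝ}
    (hF : Aᵀ * Jmat p q * A = Jmat p q) (x y : Fin (p + q) → ℝ) :
    ip p q (A *ᵥ x) (A *ᵥ y) = ip p q x y := by
  rw [ip_via_dot, ip_via_dot, dot_shift, Matrix.mulVec_mulVec, Matrix.mulVec_mulVec, hF]

section Reach

variable (hq : 1 ≤ q) (hpq : q ≤ p) (a b : Fin (p + q)) (ha : (a : ℕ) + 1 = p)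
  (hb : (b : ℕ) = p)

include hq hpq ha hb in
lemma reach (v : Fin (p + q) → ℝ) (hv0 : ip p q v v = 0) (hv1 : 0 < v a + v b) :
    ∃ g ∈ ANgrp p q, (↑g : Matrix (Fin (p + q)) (Fin (p + q)) ℝ) *ᵥ vv p q = v := by
  have hp : 1 ≤ p := le_trans hq hpq
  have hab : a ≠ b := fun h => by rw [Fin.ext_iff] at h; omega
  set A := v a + v b with hA
  have hA0 : A ≠ 0 := ne_of_gt hv1
  set u : Fin (p + q) → ℝ := fun i => if i = a ∨ i = b then 0 else v i with hu
  set c : Fin (p + q) → ℝ := fun i => -(A⁻¹) * u i with hc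
  have hua : u a = 0 := by rw [hu]; exact if_pos (Or.inl rfl)
  have hub : u b = 0 := by rw [hu]; exact if_pos (Or.inr rfl)
  have hca : c a = 0 := by rw [hc]; simp only; rw [hua]; ring
  have hcb : c b = 0 := by rw [hc]; simp only; rw [hub]; ring
  set t := Real.log (A / 2) with ht
  have hexp_t : Real.exp t = A / 2 := Real.exp_log (by positivity)
  have hXm : Xmat p q c ∈ nSet p q := xmat_mem_nSet hq hpq a b ha hb hca hcb
  have hSm : t • Smat p q ∈ aSet p q := by
    have h1 : Smat p q ∈ aSub p q := smat_mem_aSet hq hpq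
    exact (aSub p q).smul_mem t h1
  refine ⟨expUnit (Xmat p q c) * expUnit (t • Smat p q),
    mul_mem (Subgroup.subset_closure ⟨Xmat p q c, Or.inr hXm, rfl⟩)
      (Subgroup.subset_closure ⟨t • Smat p q, Or.inl hSm, rfl⟩), ?_⟩
  have hS : (t • Smat p q) *ᵥ vv p q = t • vv p q := by
    rw [Matrix.smul_mulVec, smat_vv hq hpq a b ha hb]
  have e2 : NormedSpace.exp (t • Smat p q) *ᵥ vv p q = Real.exp t • vv p q :=
    exp_mulVec_eigen hS
  have e1 := exp_xmat_vv hq hpq a b ha hb hca hcb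
  set nrm := ∑ j, sg p j * c j * c j with hnrm
  have husum : ∑ j, sg p j * u j * u j = -(v a * v a - v b * v b) := by
    have hsplit : ∀ j : Fin (p + q), (if (j : ℕ) < p then (1 : ℝ) else -1) * v j * v j
        = sg p j * u j * u j +
          ((if j = a then v a * v a else 0) + (if j = b then -(v b * v b) else 0)) := by
      intro j
      by_cases hja : j = a
      · subst hja
        unfold sg
        rw [hua, if_pos (show (j : ℕ) < p from by omega), if_pos rfl, if_neg hab]
        ring
      · by_cases hjb : j = b
        · subst hjb
          unfold sg
          rw [hub, if_neg (show ¬ (j : ℕ) < p from by omega), if_pos rfl,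
            if_neg (show ¬ j = a from fun h => hab h.symm)]
          ring
        · have huj : u j = v j := by rw [hu]; exact if_neg (not_or.mpr ⟨hja, hjb⟩)
          rw [if_neg hja, if_neg hjb, huj]
          unfold sg
          ring
    have hipv : ip p q v v = (∑ j, sg p j * u j * u j) + (v a * v a - v b * v b) := by
      unfold ip
      rw [Finset.sum_congr rfl (fun j _ => hsplit j), Finset.sum_add_distrib,
        Finset.sum_add_distrib, Finset.sum_ite_eq' Finset.univ a (fun _ => v a * v a),
        Finset.sum_ite_eq' Finset.univ b (fun _ => -(v b * v b)),
        if_pos (Finset.mem_univ a), if_pos (Finset.mem_univ b)]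
      ring
    rw [hipv] at hv0
    linarith
  have hnrmval : nrm * (A * A) = -(v a * v a - v b * v b) := by
    have hexpand : nrm = A⁻¹ * A⁻¹ * ∑ j, sg p j * u j * u j := by
      rw [hnrm, Finset.mul_sum]
      refine Finset.sum_congr rfl fun j _ => ?_
      rw [hc]
      simp only
      ring
    rw [hexpand, husum]
    field_simp
  have h4 : nrm * A * A = -(v a * v a - v b * v b) := by rw [mul_assoc]; exact hnrmval
  have h6 : (nrm * A + (v a - v b)) * A = 0 := by
    calc (nrm * A + (v a - v b)) * A = nrm * A * A + (v a - v b) * A := by ring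
      _ = 0 := by rw [h4, hA]; ring
  have h5 : nrm * A = -(v a - v b) := by
    rcases mul_eq_zero.mp h6 with h7 | h7
    · linarith
    · exact absurd h7 hA0
  rw [show ((expUnit (Xmat p q c) * expUnit (t • Smat p q) :
      (Matrix (Fin (p + q)) (Fin (p + q)) ℝ)ˣ) : Matrix (Fin (p + q)) (Fin (p + q)) ℝ)
      = NormedSpace.exp (Xmat p q c) * NormedSpace.exp (t • Smat p q) from rfl]
  rw [← Matrix.mulVec_mulVec, e2, Matrix.mulVec_smul, e1, hexp_t]
  funext i
  simp only [Pi.smul_apply, Pi.add_apply, smul_eq_mul]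
  by_cases hia : i = a
  · have hvva : vv p q a = 1 := by unfold vv; rw [if_pos ha]
    have hwva : wv p q a = 1 := by unfold wv; rw [if_pos ha]
    rw [hia, hvva, hwva, hca]
    have hrw : A / 2 * (1 + -2 * 0 + -nrm * 1) = (A - nrm * A) / 2 := by ring
    rw [hrw, h5, hA]
    ring
  · by_cases hib : i = b
    · have hvvb : vv p q b = 1 := by unfold vv; rw [if_neg (by omega), if_pos hb]
      have hwvb : wv p q b = -1 := by unfold wv; rw [if_neg (by omega), if_pos hb]
      rw [hib, hvvb, hwvb, hcb]
      have hrw : A / 2 * (1 + -2 * 0 + -nrm * -1) = (A + nrm * A) / 2 := by ring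
      rw [hrw, h5, hA]
      ring
    · have hvvi : vv p q i = 0 := by
        unfold vv
        rw [if_neg (fun h => hia (Fin.ext (by omega))), if_neg (fun h => hib (Fin.ext (by omega)))]
      have hwvi : wv p q i = 0 := by
        unfold wv
        rw [if_neg (fun h => hia (Fin.ext (by omega))), if_neg (fun h => hib (Fin.ext (by omega)))]
      have hci : c i = -(A⁻¹) * v i := by
        rw [hc]
        simp only
        rw [hu]
        simp only
        rw [if_neg (not_or.mpr ⟨hia, hib⟩)]
      rw [hvvi, hwvi, hci]
      have hrw : A / 2 * (0 + -2 * (-A⁻¹ * v i) + -nrm * 0) = A * A⁻¹ * v i := by ring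
      rw [hrw, mul_inv_cancel₀ hA0, one_mul]

end Reach

end ANaux

end
/-- `Λ₊ := {v : ⟨v,v⟩ = 0, v^p + v^{p+1} > 0}` is a single `AN`-orbit:
for every `x ∈ Λ₊`, `AN(x) = Λ₊`. -/
theorem ANgrp_orbit_lightcone (p q : ℕ) (hq : 1 ≤ q) (hpq : q ≤ p)
    (x : Fin (p + q) → ℝ)
    (hx0 : ip p q x x = 0) (hx1 : 0 < vent x p + vent x (p + 1)) :
    orb (ANgrp p q) x = {v | ip p q v v = 0 ∧ 0 < vent v p + vent v (p + 1)} := by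
  have hp : 1 ≤ p := le_trans hq hpq
  have hlt1 : p - 1 < p + q := by omega
  have hlt2 : p < p + q := by omega
  set a : Fin (p + q) := ⟨p - 1, hlt1⟩ with haDef
  set b : Fin (p + q) := ⟨p, hlt2⟩ with hbDef
  have ha : (a : ℕ) + 1 = p := show p - 1 + 1 = p by omega
  have hb : (b : ℕ) = p := rfl
  have hx1' : 0 < x a + x b := by rw [← ANaux.vent_sum_eq a b ha hb x]; exact hx1
  ext v
  simp only [Set.mem_setOf_eq]
  constructor
  · rintro ⟨g, hg, rfl⟩
    obtain ⟨hF, lam, hlam, hEig⟩ := ANaux.good_of_mem hq hpq a b ha hb hg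
    obtain ⟨hFi, lami, hlami, hEigi⟩ := ANaux.good_of_mem hq hpq a b ha hb (inv_mem hg)
    constructor
    · rw [ANaux.ip_invariant hF]
      exact hx0
    · rw [ANaux.vent_sum_eq a b ha hb]
      have h1 : ((↑g : Matrix (Fin (p + q)) (Fin (p + q)) ℝ) *ᵥ x) a
          + ((↑g : Matrix (Fin (p + q)) (Fin (p + q)) ℝ) *ᵥ x) b
          = ip p q ((↑g : Matrix (Fin (p + q)) (Fin (p + q)) ℝ) *ᵥ x) (ANaux.wv p q) :=
        (ANaux.ip_wv a b ha hb _).symm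
      rw [h1]
      have h2 : ip p q ((↑g : Matrix (Fin (p + q)) (Fin (p + q)) ℝ) *ᵥ x) (ANaux.wv p q)
          = lami * ip p q x (ANaux.wv p q) := by
        rw [ANaux.ip_via_dot, ANaux.ip_via_dot, ANaux.dot_shift]
        have h3 : ((↑g : Matrix (Fin (p + q)) (Fin (p + q)) ℝ))ᵀ *ᵥ
            (Jmat p q *ᵥ ANaux.wv p q) = lami • (Jmat p q *ᵥ ANaux.wv p q) := by
          rw [Matrix.mulVec_mulVec]
          have h4 : ((↑g : Matrix (Fin (p + q)) (Fin (p + q)) ℝ))ᵀ * Jmat p q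
              = Jmat p q * (↑g⁻¹ : Matrix (Fin (p + q)) (Fin (p + q)) ℝ) := by
            calc ((↑g : Matrix (Fin (p + q)) (Fin (p + q)) ℝ))ᵀ * Jmat p q
                = ((↑g : Matrix (Fin (p + q)) (Fin (p + q)) ℝ))ᵀ * Jmat p q *
                  ((↑g : Matrix (Fin (p + q)) (Fin (p + q)) ℝ) * ↑g⁻¹) := by
                  rw [Units.mul_inv, Matrix.mul_one]
              _ = (((↑g : Matrix (Fin (p + q)) (Fin (p + q)) ℝ))ᵀ * Jmat p q * ↑g) * ↑g⁻¹ := by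
                  rw [← Matrix.mul_assoc]
              _ = Jmat p q * ↑g⁻¹ := by rw [hF]
          rw [h4, ← Matrix.mulVec_mulVec, hEigi, Matrix.mulVec_smul]
        rw [h3, dotProduct_smul, smul_eq_mul]
      rw [h2, ANaux.ip_wv a b ha hb x]
      exact mul_pos hlami hx1'
  · rintro ⟨hv0, hv1⟩
    have hv1' : 0 < v a + v b := by rw [← ANaux.vent_sum_eq a b ha hb v]; exact hv1
    obtain ⟨gv, hgv, hgve⟩ := ANaux.reach hq hpq a b ha hb v hv0 hv1'
    obtain ⟨gx, hgx, hgxe⟩ := ANaux.reach hq hpq a b ha hb x hx0 hx1'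
    refine ⟨gv * gx⁻¹, mul_mem hgv (inv_mem hgx), ?_⟩
    rw [Units.val_mul, ← Matrix.mulVec_mulVec]
    have hxv : (↑gx⁻¹ : Matrix (Fin (p + q)) (Fin (p + q)) ℝ) *ᵥ x = ANaux.vv p q := by
      rw [← hgxe, Matrix.mulVec_mulVec, Units.inv_mul, Matrix.one_mulVec]
    rw [hxv, hgve]
end
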